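/- Let λ be a partition of n = p + q with ℓ parts. For 𝐩 = (p_1, …, p_m) ∈ P(λ;p,q), let T(𝐩) ∈ syd(λ;p,q) be the signed Young diagram whose j-th row (1 ≤ j ≤ ℓ) has leading sign + if and only if k_{s−1} < j ≤ k_{s−1} + p_s for some 1 ≤ s ≤ m (when all parts of λ are even, T((0)) is the diagram all of whose rows have leading sign −). Then every connected component of the graph Γ(λ;p,q) contains exactly one of the diagrams T(𝐩), 𝐩 ∈ P(λ;p,q); in particular the number of connected components of Γ(λ;p,q) equals #P(λ;p,q). -/

import Mathlib

open Finset

/-- A partition of `n`, given by the function `l` listing its parts in weakly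
decreasing order: `l j = λ_j` is the `j`-th part for `1 ≤ j ≤ len`, and
`l j = 0` for `j > len`. -/
structure PartitionData : Type where
  l : ℕ → ℕ
  len : ℕ
  anti : ∀ j, 1 ≤ j → l (j + 1) ≤ l j
  pos : ∀ j, 1 ≤ j → (0 < l j ↔ j ≤ len)

namespace PartitionData

/-- The multiplicity `m(i)` of `i` as a part of the partition. -/
def mult (P : PartitionData) (i : ℕ) : ℕ :=
  ((Finset.Icc 1 P.len).filter (fun j => P.l j = i)).card

/-- The finite set of (distinct) parts of the partition. -/
def partsSet (P : PartitionData) : Finset ℕ :=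
  (Finset.Icc 1 P.len).image P.l

/-- The sum of the parts (i.e. the number `n` the partition partitions). -/
def boxSum (P : PartitionData) : ℕ := ∑ j ∈ Finset.Icc 1 P.len, P.l j

/-- The number of odd parts of the partition. -/
def oddCount (P : PartitionData) : ℕ :=
  ((Finset.Icc 1 P.len).filter (fun j => Odd (P.l j))).card

end PartitionData

/-- A signed Young diagram of shape `P` and signature `(p, q)`, encoded by the
function `f` sending each part length `i` to `m_T⁺(i)`, the number of rows of
length `i` whose leading sign is `+`.  A row of length `i` with leading sign
`+` has `(i+1)/2` plus-boxes and `i/2` minus-boxes, and vice versa. -/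
structure SYD (P : PartitionData) (p q : ℕ) : Type where
  f : ℕ → ℕ
  le_mult : ∀ i, f i ≤ P.mult i
  plus_eq : ∑ i ∈ P.partsSet, (f i * ((i + 1) / 2) + (P.mult i - f i) * (i / 2)) = p
  minus_eq : ∑ i ∈ P.partsSet, (f i * (i / 2) + (P.mult i - f i) * ((i + 1) / 2)) = q

/-- `i` and `j` are consecutive distinct parts: `i > j` with no part strictly
in between (so if the distinct parts are `i_1 > ⋯ > i_k`, the pairs are
`(i_r, i_{r+1})`). -/
def Consec (P : PartitionData) (i j : ℕ) : Prop :=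
  i ∈ P.partsSet ∧ j ∈ P.partsSet ∧ j < i ∧ ∀ x ∈ P.partsSet, ¬ (j < x ∧ x < i)

/-- `j` is the smallest part `i_k`. -/
def IsMinPart (P : PartitionData) (j : ℕ) : Prop :=
  j ∈ P.partsSet ∧ ∀ x ∈ P.partsSet, j ≤ x

/-- Adjacency of signed Young diagrams with step `c`:
`π(T) - π(T') ∈ {±c(e_r - e_{r+1})} ∪ {±c e_k}` in the coordinates indexed by
the distinct parts `i_1 > ⋯ > i_k`. -/
def AdjRel (P : PartitionData) {p q : ℕ} (c : ℕ) (T T' : SYD P p q) : Prop :=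
  (∃ i j, Consec P i j ∧ (∀ x, x ≠ i → x ≠ j → T.f x = T'.f x) ∧
    ((T.f i = T'.f i + c ∧ T'.f j = T.f j + c) ∨
      (T'.f i = T.f i + c ∧ T.f j = T'.f j + c)))
  ∨ (∃ j, IsMinPart P j ∧ (∀ x, x ≠ j → T.f x = T'.f x) ∧
      (T.f j = T'.f j + c ∨ T'.f j = T.f j + c))

/-- The orbit graph `Γ(λ;p,q)` (type AIII). -/
def orbitGraph (P : PartitionData) (p q : ℕ) : SimpleGraph (SYD P p q) :=
  SimpleGraph.fromRel (AdjRel P 1)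

/-- The set `{j : 1 ≤ j ≤ ℓ, λ_j - λ_{j+1} odd}` defining `k_1 < ⋯ < k_m`. -/
def Kset (P : PartitionData) : Finset ℕ :=
  (Finset.Icc 1 P.len).filter (fun j => Odd (P.l j - P.l (j + 1)))

/-- The parameter set `P(λ;p,q)`:
tuples `(p_1, …, p_m)` with `0 ≤ p_s ≤ k_s - k_{s-1}` and
`2·Σ_{s : λ_{k_s} odd} p_s - #(odd parts) = p - q`. -/
def Pset (P : PartitionData) (p q m : ℕ) (k : ℕ → ℕ) : Set (ℕ → ℕ) :=
  {ps | (∀ s, ¬ (1 ≤ s ∧ s ≤ m) → ps s = 0) ∧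
    (∀ s, 1 ≤ s → s ≤ m → ps s ≤ k s - k (s - 1)) ∧
    2 * (∑ s ∈ (Finset.Icc 1 m).filter (fun s => 1 ≤ k s ∧ Odd (P.l (k s))),
        (ps s : ℤ)) - (P.oddCount : ℤ) = (p : ℤ) - (q : ℤ)}

open scoped Classical

/-- `m_{T(𝐩)}⁺(i)` for the representative `T(𝐩)`: the number of rows `j` of
length `i` whose leading sign is `+`, i.e. with
`k_{s-1} < j ≤ k_{s-1} + p_s` for some `1 ≤ s ≤ m`. -/
noncomputable def fOf (P : PartitionData) (m : ℕ) (k ps : ℕ → ℕ) (i : ℕ) : ℕ :=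
  ((Finset.Icc 1 P.len).filter (fun j => P.l j = i ∧
    ∃ s ∈ Finset.Icc 1 m, k (s - 1) < j ∧ j ≤ k (s - 1) + ps s)).card


namespace PartitionData

variable (P : PartitionData)

lemma l_anti' : ∀ {a b : ℕ}, 1 ≤ a → a ≤ b → P.l b ≤ P.l a := by
  intro a b h1 hab
  induction b with
  | zero => omega
  | succ n ih =>
    rcases Nat.lt_or_ge a (n+1) with h | h
    · exact le_trans (P.anti n (by omega)) (ih (by omega))
    · have : a = n + 1 := by omega
      simp [this]

lemma l_zero_of_gt {j : ℕ} (hj : P.len < j) : P.l j = 0 := by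
  have h1 : 1 ≤ j := by
    rcases Nat.eq_zero_or_pos j with h | h
    · exfalso; omega
    · omega
  have := P.pos j h1
  omega

lemma l_pos_of_le {j : ℕ} (h1 : 1 ≤ j) (hj : j ≤ P.len) : 0 < P.l j :=
  (P.pos j h1).2 hj

lemma mem_partsSet {x : ℕ} : x ∈ P.partsSet ↔ ∃ j, 1 ≤ j ∧ j ≤ P.len ∧ P.l j = x := by
  simp [partsSet, Finset.mem_image, Finset.mem_Icc]
  constructor
  · rintro ⟨j, ⟨h1, h2⟩, h3⟩; exact ⟨j, h1, h2, h3⟩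
  · rintro ⟨j, h1, h2, h3⟩; exact ⟨j, ⟨h1, h2⟩, h3⟩

lemma l_mem_partsSet {j : ℕ} (h1 : 1 ≤ j) (hj : j ≤ P.len) : P.l j ∈ P.partsSet :=
  (P.mem_partsSet).2 ⟨j, h1, hj, rfl⟩

lemma pos_of_mem_partsSet {x : ℕ} (hx : x ∈ P.partsSet) : 0 < x := by
  obtain ⟨j, h1, h2, h3⟩ := (P.mem_partsSet).1 hx
  exact h3 ▸ P.l_pos_of_le h1 h2

lemma mult_pos {x : ℕ} (hx : x ∈ P.partsSet) : 0 < P.mult x := by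
  obtain ⟨j, h1, h2, h3⟩ := (P.mem_partsSet).1 hx
  exact Finset.card_pos.2 ⟨j, Finset.mem_filter.2 ⟨Finset.mem_Icc.2 ⟨h1, h2⟩, h3⟩⟩

lemma mult_eq_zero {x : ℕ} (hx : x ∉ P.partsSet) : P.mult x = 0 := by
  rw [mult, Finset.card_eq_zero, Finset.filter_eq_empty_iff]
  intro j hj h
  exact hx ((P.mem_partsSet).2 ⟨j, (Finset.mem_Icc.1 hj).1, (Finset.mem_Icc.1 hj).2, h⟩)

/-- if the partition strictly drops after row `r`, parts `≥ l r` are exactly those of rows `≤ r`. -/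
lemma ge_iff_row_le {r j : ℕ} (h1 : 1 ≤ r) (hs : P.l (r+1) < P.l r) (hj : 1 ≤ j) :
    P.l r ≤ P.l j ↔ j ≤ r := by
  constructor
  · intro h
    by_contra hc
    have : P.l j ≤ P.l (r+1) := P.l_anti' (by omega) (by omega)
    omega
  · intro h
    exact P.l_anti' hj h

end PartitionData

namespace PartitionData

variable (P : PartitionData)

lemma sum_mult_smul (g : ℕ → ℕ) :
    ∑ x ∈ P.partsSet, P.mult x * g x = ∑ j ∈ Finset.Icc 1 P.len, g (P.l j) := by
  rw [Finset.sum_comp g P.l]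
  rfl

lemma sum_mult_mul_self : ∑ x ∈ P.partsSet, P.mult x * x = P.boxSum :=
  P.sum_mult_smul (fun x => x)

lemma sum_mult_odd : ∑ x ∈ P.partsSet.filter (fun x => Odd x), P.mult x = P.oddCount := by
  classical
  have h := P.sum_mult_smul (fun x => if Odd x then 1 else 0)
  simp only [mul_ite, mul_one, mul_zero] at h
  rw [← Finset.sum_filter, ← Finset.sum_filter] at h
  simpa [oddCount] using h

end PartitionData

open PartitionData

/-- The sum of `f` over the odd parts, as an integer. -/
def oddZ (P : PartitionData) (f : ℕ → ℕ) : ℤ :=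
  ∑ x ∈ P.partsSet.filter (fun x => Odd x), (f x : ℤ)

section sums

variable (P : PartitionData)

lemma plus_add_minus (f : ℕ → ℕ) (hf : ∀ x, f x ≤ P.mult x) :
    (∑ i ∈ P.partsSet, (f i * ((i + 1) / 2) + (P.mult i - f i) * (i / 2)))
      + (∑ i ∈ P.partsSet, (f i * (i / 2) + (P.mult i - f i) * ((i + 1) / 2)))
      = P.boxSum := by
  rw [← Finset.sum_add_distrib, ← P.sum_mult_mul_self]
  apply Finset.sum_congr rfl
  intro x _
  have hfx := hf x
  obtain ⟨b, hb⟩ : ∃ b, P.mult x = f x + b := ⟨P.mult x - f x, by omega⟩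
  have h3 : P.mult x - f x = b := by omega
  have hx2 : (x + 1) / 2 + x / 2 = x := by omega
  rw [h3, hb]
  have : f x * ((x + 1) / 2) + b * (x / 2) + (f x * (x / 2) + b * ((x + 1) / 2))
      = (f x + b) * ((x + 1) / 2 + x / 2) := by ring
  rw [this, hx2]

lemma plus_sub_minus (f : ℕ → ℕ) (hf : ∀ x, f x ≤ P.mult x) :
    ((∑ i ∈ P.partsSet, (f i * ((i + 1) / 2) + (P.mult i - f i) * (i / 2)) : ℕ) : ℤ)
      - ((∑ i ∈ P.partsSet, (f i * (i / 2) + (P.mult i - f i) * ((i + 1) / 2)) : ℕ) : ℤ)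
      = 2 * oddZ P f - P.oddCount := by
  classical
  push_cast
  rw [← Finset.sum_sub_distrib]
  have key : ∀ x ∈ P.partsSet,
      ((f x : ℤ) * (((x + 1) / 2 : ℕ) : ℤ) + ((P.mult x : ℤ) - f x) * ((x / 2 : ℕ) : ℤ))
        - ((f x : ℤ) * ((x / 2 : ℕ) : ℤ) + ((P.mult x : ℤ) - f x) * (((x + 1) / 2 : ℕ) : ℤ))
      = if Odd x then 2 * (f x : ℤ) - P.mult x else 0 := by
    intro x _
    by_cases hodd : Odd x
    · have hd : (x + 1) / 2 = x / 2 + 1 := by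
        have := Nat.odd_iff.1 hodd; omega
      rw [if_pos hodd, hd]; push_cast; ring
    · have hd : (x + 1) / 2 = x / 2 := by
        have := Nat.even_iff.1 (Nat.not_odd_iff_even.1 hodd); omega
      rw [if_neg hodd, hd]; ring
  have step1 : ∑ x ∈ P.partsSet,
      (((f x : ℤ) * (((x + 1) / 2 : ℕ) : ℤ) + ((P.mult x : ℤ) - f x) * ((x / 2 : ℕ) : ℤ))
        - ((f x : ℤ) * ((x / 2 : ℕ) : ℤ) + ((P.mult x : ℤ) - f x) * (((x + 1) / 2 : ℕ) : ℤ)))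
      = ∑ x ∈ P.partsSet.filter (fun x => Odd x), (2 * (f x : ℤ) - P.mult x) := by
    rw [Finset.sum_congr rfl key, Finset.sum_filter]
  have step2 : ∑ x ∈ P.partsSet.filter (fun x => Odd x), (2 * (f x : ℤ) - P.mult x)
      = 2 * oddZ P f - P.oddCount := by
    rw [Finset.sum_sub_distrib, ← Finset.mul_sum, ← P.sum_mult_odd]
    push_cast
    rfl
  have hcast : ∀ x ∈ P.partsSet, ((P.mult x - f x : ℕ) : ℤ) = (P.mult x : ℤ) - f x := by
    intro x _; exact_mod_cast Nat.cast_sub (hf x)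
  calc ∑ x ∈ P.partsSet,
        ((f x : ℤ) * (((x + 1) / 2 : ℕ) : ℤ) + ((P.mult x - f x : ℕ) : ℤ) * ((x / 2 : ℕ) : ℤ)
          - ((f x : ℤ) * ((x / 2 : ℕ) : ℤ)
            + ((P.mult x - f x : ℕ) : ℤ) * (((x + 1) / 2 : ℕ) : ℤ)))
      = ∑ x ∈ P.partsSet,
        (((f x : ℤ) * (((x + 1) / 2 : ℕ) : ℤ) + ((P.mult x : ℤ) - f x) * ((x / 2 : ℕ) : ℤ))
          - ((f x : ℤ) * ((x / 2 : ℕ) : ℤ)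
            + ((P.mult x : ℤ) - f x) * (((x + 1) / 2 : ℕ) : ℤ))) := by
        apply Finset.sum_congr rfl
        intro x hx
        rw [hcast x hx]
    _ = 2 * oddZ P f - P.oddCount := step1.trans step2

variable {P} {p q : ℕ}

/-- Construct a signed Young diagram from bounds and the odd-parity balance equation. -/
def mkSYD (f : ℕ → ℕ) (hf : ∀ x, f x ≤ P.mult x) (hn : P.boxSum = p + q)
    (hodd : 2 * oddZ P f - P.oddCount = (p : ℤ) - q) : SYD P p q := by
  refine ⟨f, hf, ?_, ?_⟩ <;>
  · have h1 := plus_add_minus P f hf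
    have h2 := plus_sub_minus P f hf
    rw [hodd] at h2
    rw [hn] at h1
    omega

@[simp] lemma mkSYD_f (f : ℕ → ℕ) (hf : ∀ x, f x ≤ P.mult x) (hn : P.boxSum = p + q)
    (hodd : 2 * oddZ P f - P.oddCount = (p : ℤ) - q) : (mkSYD f hf hn hodd).f = f := rfl

lemma SYD.oddZ_spec (T : SYD P p q) : 2 * oddZ P T.f - P.oddCount = (p : ℤ) - q := by
  have h2 := plus_sub_minus P T.f T.le_mult
  rw [T.plus_eq, T.minus_eq] at h2
  omega

lemma SYD.f_eq_zero (T : SYD P p q) {x : ℕ} (hx : x ∉ P.partsSet) : T.f x = 0 := by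
  have := T.le_mult x
  rw [P.mult_eq_zero hx] at this
  omega

lemma SYD.ext' {T T' : SYD P p q} (h : T.f = T'.f) : T = T' := by
  cases T; cases T'; simp_all

end sums

section usum

variable (P : PartitionData)

/-- Sum of `f` over the parts `≥ x`. -/
def Usum (f : ℕ → ℕ) (x : ℕ) : ℕ := ∑ y ∈ P.partsSet.filter (fun y => x ≤ y), f y

/-- A part is bound if the invariants prevent moves across it. -/
def Bound (x : ℕ) : Prop :=
  (IsMinPart P x ∧ Odd x) ∨ ∃ j, Consec P x j ∧ ¬(Odd x ↔ Odd j)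

variable {P}

lemma Bound.mem {x : ℕ} (h : Bound P x) : x ∈ P.partsSet := by
  rcases h with ⟨⟨h1, _⟩, _⟩ | ⟨j, ⟨h1, _⟩, _⟩ <;> exact h1

lemma consec_unique {i j j' : ℕ} (h : Consec P i j) (h' : Consec P i j') : j = j' := by
  obtain ⟨hi, hj, hji, hbet⟩ := h
  obtain ⟨_, hj', hji', hbet'⟩ := h'
  by_contra hne
  rcases Nat.lt_or_ge j j' with hlt | hge
  · exact hbet j' hj' ⟨hlt, hji'⟩
  · exact hbet' j hj ⟨by omega, hji⟩

lemma sum_delta_pair {S : Finset ℕ} {g : ℕ → ℤ} {i j : ℕ} (hij : i ≠ j)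
    (h : ∀ x, x ≠ i → x ≠ j → g x = 0) :
    ∑ x ∈ S, g x = (if i ∈ S then g i else 0) + (if j ∈ S then g j else 0) := by
  classical
  have hx : ∀ x, g x = (if x = i then g i else 0) + (if x = j then g j else 0) := by
    intro x
    by_cases h1 : x = i
    · subst h1; simp [hij]
    · by_cases h2 : x = j
      · subst h2; simp [h1]
      · simp [h1, h2, h x h1 h2]
  rw [Finset.sum_congr rfl (fun x _ => hx x), Finset.sum_add_distrib,
    Finset.sum_ite_eq' S i (fun _ => g i), Finset.sum_ite_eq' S j (fun _ => g j)]

lemma sum_delta_single {S : Finset ℕ} {g : ℕ → ℤ} {i : ℕ}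
    (h : ∀ x, x ≠ i → g x = 0) :
    ∑ x ∈ S, g x = if i ∈ S then g i else 0 := by
  classical
  have hx : ∀ x, g x = if x = i then g i else 0 := by
    intro x
    by_cases h1 : x = i
    · subst h1; simp
    · simp [h1, h x h1]
  rw [Finset.sum_congr rfl (fun x _ => hx x), Finset.sum_ite_eq' S i (fun _ => g i)]

lemma Usum_cast_sub (f f' : ℕ → ℕ) (x : ℕ) :
    (Usum P f x : ℤ) - Usum P f' x
      = ∑ y ∈ P.partsSet.filter (fun y => x ≤ y), ((f y : ℤ) - f' y) := by
  rw [Finset.sum_sub_distrib]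
  push_cast [Usum]
  ring

lemma oddZ_sub (f f' : ℕ → ℕ) :
    oddZ P f - oddZ P f'
      = ∑ y ∈ P.partsSet.filter (fun y => Odd y), ((f y : ℤ) - f' y) := by
  rw [Finset.sum_sub_distrib]; rfl

variable {p q : ℕ}

lemma SYD.oddZ_eq (T T' : SYD P p q) : oddZ P T.f = oddZ P T'.f := by
  have h1 := T.oddZ_spec
  have h2 := T'.oddZ_spec
  omega

lemma adjRel_usum {T T' : SYD P p q} (h : AdjRel P 1 T T') :
    ∀ x, Bound P x → Usum P T.f x = Usum P T'.f x := by
  classical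
  have hodd : oddZ P T.f = oddZ P T'.f := T.oddZ_eq T'
  rcases h with ⟨i, j, hC, hoff, hor⟩ | ⟨j, hmin, hoff, hor⟩
  · obtain ⟨hi, hj, hji, hbet⟩ := hC
    have hij : i ≠ j := by omega
    set g : ℕ → ℤ := fun y => (T.f y : ℤ) - T'.f y with hg
    have hg0 : ∀ y, y ≠ i → y ≠ j → g y = 0 := by
      intro y h1 h2; simp [hg, hoff y h1 h2]
    have hgij : g i + g j = 0 ∧ (g i = 1 ∨ g i = -1) := by
      rcases hor with ⟨h1, h2⟩ | ⟨h1, h2⟩ <;>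
        constructor <;> simp only [hg] <;> omega
    have hpar : Odd i ↔ Odd j := by
      by_contra hpar
      have hs := sum_delta_pair (S := P.partsSet.filter (fun y => Odd y)) hij hg0
      rw [← oddZ_sub] at hs
      rw [hodd, sub_self] at hs
      by_cases hoi : Odd i
      · have hoj : ¬ Odd j := fun hh => hpar (by tauto)
        rw [if_pos (Finset.mem_filter.2 ⟨hi, hoi⟩),
          if_neg (fun hh => hoj (Finset.mem_filter.1 hh).2)] at hs
        omega
      · have hoj : Odd j := by tauto
        rw [if_neg (fun hh => hoi (Finset.mem_filter.1 hh).2),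
          if_pos (Finset.mem_filter.2 ⟨hj, hoj⟩)] at hs
        omega
    intro x hbx
    have hs := sum_delta_pair (S := P.partsSet.filter (fun y => x ≤ y)) hij hg0
    rw [← Usum_cast_sub] at hs
    by_cases hxj : x ≤ j
    · rw [if_pos (Finset.mem_filter.2 ⟨hi, by omega⟩),
        if_pos (Finset.mem_filter.2 ⟨hj, hxj⟩), hgij.1] at hs
      omega
    · by_cases hxi : x ≤ i
      · exfalso
        have hxmem := hbx.mem
        have hxe : x = i := by
          have := hbet x hxmem
          omega
        subst hxe
        rcases hbx with ⟨⟨_, hmin'⟩, _⟩ | ⟨j', hC', hpar'⟩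
        · exact absurd (hmin' j hj) (by omega)
        · have : j' = j := consec_unique hC' ⟨hi, hj, hji, hbet⟩
          subst this
          exact hpar' hpar
      · rw [if_neg (fun hh => hxi (Finset.mem_filter.1 hh).2),
          if_neg (fun hh => hxj (Finset.mem_filter.1 hh).2)] at hs
        omega
  · obtain ⟨hj, hmin⟩ := hmin
    set g : ℕ → ℤ := fun y => (T.f y : ℤ) - T'.f y with hg
    have hg0 : ∀ y, y ≠ j → g y = 0 := by
      intro y h1; simp [hg, hoff y h1]
    have hgj : g j = 1 ∨ g j = -1 := by
      rcases hor with h1 | h1 <;> simp only [hg] <;> omega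
    have hje : ¬ Odd j := by
      intro hoj
      have hs := sum_delta_single (S := P.partsSet.filter (fun y => Odd y)) hg0
      rw [← oddZ_sub, hodd, sub_self, if_pos (Finset.mem_filter.2 ⟨hj, hoj⟩)] at hs
      omega
    intro x hbx
    have hs := sum_delta_single (S := P.partsSet.filter (fun y => x ≤ y)) hg0
    rw [← Usum_cast_sub] at hs
    by_cases hxj : x ≤ j
    · exfalso
      have hxmem := hbx.mem
      have hxe : x = j := le_antisymm hxj (hmin x hxmem)
      subst hxe
      rcases hbx with ⟨_, hox⟩ | ⟨j', ⟨_, hj', hji', _⟩, _⟩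
      · exact hje hox
      · exact absurd (hmin j' hj') (by omega)
    · rw [if_neg (fun hh => hxj (Finset.mem_filter.1 hh).2)] at hs
      omega

lemma adj_usum {T T' : SYD P p q} (h : (orbitGraph P p q).Adj T T') :
    ∀ x, Bound P x → Usum P T.f x = Usum P T'.f x := by
  rw [orbitGraph, SimpleGraph.fromRel_adj] at h
  rcases h.2 with h' | h'
  · exact adjRel_usum h'
  · exact fun x hx => (adjRel_usum h' x hx).symm

lemma reach_usum {T T' : SYD P p q} (h : (orbitGraph P p q).Reachable T T') :
    ∀ x, Bound P x → Usum P T.f x = Usum P T'.f x := by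
  obtain ⟨w⟩ := h
  induction w with
  | nil => exact fun x _ => rfl
  | cons ha _ ih => exact fun x hx => (adj_usum ha x hx).trans (ih x hx)

end usum

section move

variable {P : PartitionData} {p q : ℕ}

lemma usum_split (f : ℕ → ℕ) {z : ℕ} (hz : z ∈ P.partsSet) :
    Usum P f z = f z + ∑ y ∈ P.partsSet.filter (fun y => z < y), f y := by
  classical
  have hins : P.partsSet.filter (fun y => z ≤ y)
      = insert z (P.partsSet.filter (fun y => z < y)) := by
    ext y
    simp only [Finset.mem_filter, Finset.mem_insert]
    constructor
    · rintro ⟨h1, h2⟩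
      rcases Nat.eq_or_lt_of_le h2 with h | h
      · exact Or.inl h.symm
      · exact Or.inr ⟨h1, h⟩
    · rintro (rfl | ⟨h1, h2⟩)
      · exact ⟨hz, le_rfl⟩
      · exact ⟨h1, le_of_lt h2⟩
  rw [Usum, hins, Finset.sum_insert (by simp)]

lemma usum_above (f : ℕ → ℕ) {z : ℕ}
    (hne : (P.partsSet.filter (fun y => z < y)).Nonempty) :
    ∑ y ∈ P.partsSet.filter (fun y => z < y), f y
      = Usum P f ((P.partsSet.filter (fun y => z < y)).min' hne) := by
  classical
  have hz'mem := Finset.min'_mem _ hne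
  have hz'z : z < (P.partsSet.filter (fun y => z < y)).min' hne :=
    (Finset.mem_filter.1 hz'mem).2
  have heq : P.partsSet.filter (fun y => z < y)
      = P.partsSet.filter (fun y => (P.partsSet.filter (fun y => z < y)).min' hne ≤ y) := by
    ext y
    simp only [Finset.mem_filter, and_congr_right_iff]
    intro hy
    constructor
    · intro h; exact Finset.min'_le _ y (Finset.mem_filter.2 ⟨hy, h⟩)
    · intro h; omega
  rw [Usum]
  exact Finset.sum_congr heq (fun _ _ => rfl)

lemma move_exists (T T' : SYD P p q) (hn : P.boxSum = p + q)
    (hb : ∀ x, Bound P x → Usum P T.f x = Usum P T'.f x)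
    {x₀ : ℕ} (hx₀ : x₀ ∈ P.partsSet) (hlt0 : Usum P T.f x₀ < Usum P T'.f x₀) :
    ∃ (T'' : SYD P p q) (w : ℕ), (orbitGraph P p q).Adj T T'' ∧ w ∈ P.partsSet ∧
      Usum P T''.f w = Usum P T.f w + 1 ∧ Usum P T.f w < Usum P T'.f w ∧
      ∀ x ∈ P.partsSet, x ≠ w → Usum P T''.f x = Usum P T.f x := by
  classical
  -- extract a maximizer of the (truncated) difference of upper sums
  obtain ⟨M, u, hM1, huK, hMle, huD, huTop⟩ :
      ∃ (M : ℕ) (u : ℕ), 1 ≤ M ∧ u ∈ P.partsSet ∧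
        (∀ y ∈ P.partsSet, Usum P T'.f y ≤ Usum P T.f y + M) ∧
        (Usum P T'.f u = Usum P T.f u + M) ∧
        (∀ y ∈ P.partsSet, u < y → Usum P T'.f y + 1 ≤ Usum P T.f y + M) := by
    classical
    set D : ℕ → ℕ := fun x => Usum P T'.f x - Usum P T.f x with hD
    have hne : (P.partsSet.image D).Nonempty := ⟨D x₀, Finset.mem_image_of_mem _ hx₀⟩
    have hune : (P.partsSet.filter (fun x => D x = (P.partsSet.image D).max' hne)).Nonempty := by
      obtain ⟨y, hy, hyD⟩ := Finset.mem_image.1 (Finset.max'_mem _ hne)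
      exact ⟨y, Finset.mem_filter.2 ⟨hy, hyD⟩⟩
    obtain ⟨huK, huDM⟩ := Finset.mem_filter.1 (Finset.max'_mem _ hune)
    have hle : ∀ y ∈ P.partsSet, D y ≤ D ((P.partsSet.filter
        (fun x => D x = (P.partsSet.image D).max' hne)).max' hune) := by
      intro y hy
      rw [huDM]
      exact Finset.le_max' _ _ (Finset.mem_image_of_mem _ hy)
    have htop : ∀ y ∈ P.partsSet,
        (P.partsSet.filter (fun x => D x = (P.partsSet.image D).max' hne)).max' hune < y →
        D y ≠ D ((P.partsSet.filter
          (fun x => D x = (P.partsSet.image D).max' hne)).max' hune) := by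
      intro y hy hgt he
      rw [huDM] at he
      have := Finset.le_max' (P.partsSet.filter
        (fun x => D x = (P.partsSet.image D).max' hne)) y (Finset.mem_filter.2 ⟨hy, he⟩)
      omega
    refine ⟨D ((P.partsSet.filter (fun x => D x = (P.partsSet.image D).max' hne)).max' hune),
      (P.partsSet.filter (fun x => D x = (P.partsSet.image D).max' hne)).max' hune,
      ?_, huK, ?_, ?_, ?_⟩
    · have h1 := hle x₀ hx₀
      simp only [hD] at h1 ⊢
      omega
    · intro y hy
      have h1 := hle y hy
      simp only [hD] at h1 ⊢
      omega
    · have h1 := hle x₀ hx₀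
      simp only [hD] at h1 ⊢
      omega
    · intro y hy hgt
      have h1 := hle y hy
      have h2 := htop y hy hgt
      have h3 := hle x₀ hx₀
      simp only [hD] at h1 h2 h3 ⊢
      omega
  -- extract the bottom w of the blocked run below u
  obtain ⟨w, hwK, hwu, hrun, hwmin⟩ :
      ∃ w, w ∈ P.partsSet ∧ w ≤ u ∧
        (∀ y ∈ P.partsSet, w ≤ y → y < u →
          (Usum P T'.f y = Usum P T.f y + M ∧ T.f y = 0)) ∧
        (∀ z, z ∈ P.partsSet → z ≤ u →
          (∀ y ∈ P.partsSet, z ≤ y → y < u →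
            (Usum P T'.f y = Usum P T.f y + M ∧ T.f y = 0)) → w ≤ z) := by
    classical
    set B := P.partsSet.filter (fun z => z ≤ u ∧
      ∀ y ∈ P.partsSet, z ≤ y → y < u →
        (Usum P T'.f y = Usum P T.f y + M ∧ T.f y = 0)) with hBdef
    have hBu : u ∈ B :=
      Finset.mem_filter.2 ⟨huK, le_rfl, fun y _ h1 h2 => absurd h2 (by omega)⟩
    have hBne : B.Nonempty := ⟨u, hBu⟩
    obtain ⟨h1, h2, h3⟩ := Finset.mem_filter.1 (Finset.min'_mem _ hBne)
    exact ⟨B.min' hBne, h1, h2, h3,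
      fun z hz1 hz2 hz3 => Finset.min'_le _ z (Finset.mem_filter.2 ⟨hz1, hz2, hz3⟩)⟩
  have hDw : Usum P T'.f w = Usum P T.f w + M := by
    rcases Nat.eq_or_lt_of_le hwu with h | h
    · rw [h]; exact huD
    · exact (hrun w hwK le_rfl h).1
  -- the top of the run has slack
  have hfu : T.f u < T'.f u := by
    have hsT := usum_split T.f huK
    have hsT' := usum_split T'.f huK
    rcases (P.partsSet.filter (fun y => u < y)).eq_empty_or_nonempty with he | hne
    · rw [he] at hsT hsT'
      simp only [Finset.sum_empty, add_zero] at hsT hsT'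
      omega
    · have haT := usum_above T.f hne
      have haT' := usum_above T'.f hne
      have hu'mem := Finset.min'_mem _ hne
      have hu'K : (P.partsSet.filter (fun y => u < y)).min' hne ∈ P.partsSet :=
        (Finset.mem_filter.1 hu'mem).1
      have hu'gt : u < (P.partsSet.filter (fun y => u < y)).min' hne :=
        (Finset.mem_filter.1 hu'mem).2
      have hDu' := huTop _ hu'K hu'gt
      omega
  have hfw : T.f w < P.mult w := by
    rcases Nat.eq_or_lt_of_le hwu with h | h
    · rw [h]; exact lt_of_lt_of_le hfu (T'.le_mult u)
    · rw [(hrun w hwK le_rfl h).2]; exact P.mult_pos hwK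
  have hnotB : ¬ Bound P w := by
    intro hB
    have := hb w hB
    omega
  have hUw : Usum P T.f w < Usum P T'.f w := by omega
  rcases (P.partsSet.filter (fun y => y < w)).eq_empty_or_nonempty with hLe | hLne
  · -- w is the minimal part; it must be even
    have hminw : IsMinPart P w := by
      refine ⟨hwK, fun y hy => ?_⟩
      by_contra hcon
      have : y ∈ P.partsSet.filter (fun y => y < w) :=
        Finset.mem_filter.2 ⟨hy, by omega⟩
      rw [hLe] at this
      exact absurd this (Finset.notMem_empty y)
    have heven : ¬ Odd w := fun ho => hnotB (Or.inl ⟨hminw, ho⟩)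
    set f'' := Function.update T.f w (T.f w + 1) with hf''def
    have hf''w : f'' w = T.f w + 1 := Function.update_self _ _ _
    have hf''x : ∀ x, x ≠ w → f'' x = T.f x := fun x hx => Function.update_of_ne hx _ _
    have hf''le : ∀ x, f'' x ≤ P.mult x := by
      intro x
      by_cases hx : x = w
      · subst hx; rw [hf''w]; omega
      · rw [hf''x x hx]; exact T.le_mult x
    have hg0 : ∀ y, y ≠ w → ((f'' y : ℤ) - T.f y) = 0 := by
      intro y hy; rw [hf''x y hy]; ring
    have hoddeq : oddZ P f'' = oddZ P T.f := by
      have hs := sum_delta_single (S := P.partsSet.filter (fun y => Odd y)) hg0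
      rw [← oddZ_sub] at hs
      rw [if_neg (fun hh => heven (Finset.mem_filter.1 hh).2)] at hs
      omega
    have hodd'' : 2 * oddZ P f'' - P.oddCount = (p : ℤ) - q := by
      rw [hoddeq]; exact T.oddZ_spec
    refine ⟨mkSYD f'' hf''le hn hodd'', w, ?_, hwK, ?_, hUw, ?_⟩
    · rw [orbitGraph, SimpleGraph.fromRel_adj]
      constructor
      · intro he
        have : T.f w = f'' w := by rw [he]; rfl
        omega
      · exact Or.inl (Or.inr ⟨w, hminw, fun x hx => (hf''x x hx).symm,
          Or.inr (by rw [mkSYD_f, hf''w])⟩)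
    · have hs := sum_delta_single (S := P.partsSet.filter (fun y => w ≤ y)) hg0
      rw [← Usum_cast_sub, if_pos (Finset.mem_filter.2 ⟨hwK, le_rfl⟩)] at hs
      rw [hf''w] at hs
      rw [mkSYD_f]
      omega
    · intro x hxK hxw
      have hs := sum_delta_single (S := P.partsSet.filter (fun y => x ≤ y)) hg0
      rw [← Usum_cast_sub] at hs
      have hwnot : w ∉ P.partsSet.filter (fun y => x ≤ y) := by
        intro hh
        have hxle : x ≤ w := (Finset.mem_filter.1 hh).2
        exact hxw (le_antisymm hxle (hminw.2 x hxK))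
      rw [if_neg hwnot] at hs
      rw [mkSYD_f]
      omega
  · -- w has a next smaller part v
    obtain ⟨v, hvK, hvw, hvmax⟩ :
        ∃ v, v ∈ P.partsSet ∧ v < w ∧ ∀ z ∈ P.partsSet, z < w → z ≤ v := by
      obtain ⟨h1, h2⟩ := Finset.mem_filter.1 (Finset.max'_mem _ hLne)
      refine ⟨(P.partsSet.filter (fun y => y < w)).max' hLne, h1, h2, fun z hz1 hz2 => ?_⟩
      exact Finset.le_max' (P.partsSet.filter (fun y => y < w)) z
        (Finset.mem_filter.2 ⟨hz1, hz2⟩)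
    have hcons : Consec P w v := by
      refine ⟨hwK, hvK, hvw, fun z hz hcon => ?_⟩
      have := hvmax z hz hcon.2
      omega
    have hpar : Odd w ↔ Odd v := by
      by_contra h
      exact hnotB (Or.inr ⟨v, hcons, h⟩)
    -- usum splits at v through w
    have hsplit : ∀ g : ℕ → ℕ, Usum P g v = g v + Usum P g w := by
      intro g
      have hAv : (P.partsSet.filter (fun y => v < y)).Nonempty :=
        ⟨w, Finset.mem_filter.2 ⟨hwK, hvw⟩⟩
      have hminAv : (P.partsSet.filter (fun y => v < y)).min' hAv = w := by
        apply le_antisymm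
        · exact Finset.min'_le _ w (Finset.mem_filter.2 ⟨hwK, hvw⟩)
        · have hmem := Finset.min'_mem _ hAv
          have h1 : (P.partsSet.filter (fun y => v < y)).min' hAv ∈ P.partsSet :=
            (Finset.mem_filter.1 hmem).1
          have h2 : v < (P.partsSet.filter (fun y => v < y)).min' hAv :=
            (Finset.mem_filter.1 hmem).2
          by_contra hcon
          exact hcons.2.2.2 _ h1 ⟨h2, by omega⟩
      rw [usum_split g hvK, usum_above g hAv, hminAv]
    have hfv : 1 ≤ T.f v := by
      by_contra hcon
      have hfv0 : T.f v = 0 := by omega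
      -- then v would extend the run, contradicting minimality of w
      have hDv : Usum P T'.f v = Usum P T.f v + M := by
        have h1 := hsplit T.f
        have h2 := hsplit T'.f
        have h3 := hMle v hvK
        have h4 := T'.le_mult v
        omega
      have : w ≤ v := by
        apply hwmin v hvK (by omega)
        intro y hy h1 h2
        rcases Nat.lt_or_ge y w with hyw | hyw
        · have := hvmax y hy hyw
          have hyv : y = v := by omega
          rw [hyv]; exact ⟨hDv, hfv0⟩
        · exact hrun y hy hyw h2
      omega
    set f'' := Function.update (Function.update T.f w (T.f w + 1)) v (T.f v - 1) with hf''def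
    have hwv : w ≠ v := by omega
    have hvwne : v ≠ w := by omega
    have hf''w : f'' w = T.f w + 1 := by
      rw [hf''def, Function.update_of_ne hwv, Function.update_self]
    have hf''v : f'' v = T.f v - 1 := Function.update_self _ _ _
    have hf''x : ∀ x, x ≠ w → x ≠ v → f'' x = T.f x := by
      intro x h1 h2
      rw [hf''def, Function.update_of_ne h2, Function.update_of_ne h1]
    have hf''le : ∀ x, f'' x ≤ P.mult x := by
      intro x
      by_cases h1 : x = w
      · subst h1; rw [hf''w]; omega
      · by_cases h2 : x = v
        · subst h2; rw [hf''v]; have := T.le_mult x; omega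
        · rw [hf''x x h1 h2]; exact T.le_mult x
    have hg0 : ∀ y, y ≠ w → y ≠ v → ((f'' y : ℤ) - T.f y) = 0 := by
      intro y h1 h2; rw [hf''x y h1 h2]; ring
    have hgw : (f'' w : ℤ) - T.f w = 1 := by rw [hf''w]; push_cast; ring
    have hgv : (f'' v : ℤ) - T.f v = -1 := by rw [hf''v]; omega
    have hoddeq : oddZ P f'' = oddZ P T.f := by
      have hs := sum_delta_pair (S := P.partsSet.filter (fun y => Odd y)) hwv hg0
      rw [← oddZ_sub] at hs
      by_cases how : Odd w
      · rw [if_pos (Finset.mem_filter.2 ⟨hwK, how⟩),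
          if_pos (Finset.mem_filter.2 ⟨hvK, hpar.1 how⟩), hgw, hgv] at hs
        omega
      · have hov : ¬ Odd v := fun h => how (hpar.2 h)
        rw [if_neg (fun hh => how (Finset.mem_filter.1 hh).2),
          if_neg (fun hh => hov (Finset.mem_filter.1 hh).2)] at hs
        omega
    have hodd'' : 2 * oddZ P f'' - P.oddCount = (p : ℤ) - q := by
      rw [hoddeq]; exact T.oddZ_spec
    refine ⟨mkSYD f'' hf''le hn hodd'', w, ?_, hwK, ?_, hUw, ?_⟩
    · rw [orbitGraph, SimpleGraph.fromRel_adj]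
      constructor
      · intro he
        have : T.f w = f'' w := by rw [he]; rfl
        omega
      · refine Or.inl (Or.inl ⟨w, v, hcons, fun x h1 h2 => (hf''x x h1 h2).symm, Or.inr ?_⟩)
        rw [mkSYD_f]
        exact ⟨by rw [hf''w], by rw [hf''v]; omega⟩
    · have hs := sum_delta_pair (S := P.partsSet.filter (fun y => w ≤ y)) hwv hg0
      rw [← Usum_cast_sub, if_pos (Finset.mem_filter.2 ⟨hwK, le_rfl⟩),
        if_neg (fun hh => absurd ((Finset.mem_filter.1 hh).2) (by omega)), hgw] at hs
      rw [mkSYD_f]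
      omega
    · intro x hxK hxw
      have hs := sum_delta_pair (S := P.partsSet.filter (fun y => x ≤ y)) hwv hg0
      rw [← Usum_cast_sub] at hs
      rw [mkSYD_f]
      by_cases hxv : x ≤ v
      · rw [if_pos (Finset.mem_filter.2 ⟨hwK, by omega⟩),
          if_pos (Finset.mem_filter.2 ⟨hvK, hxv⟩), hgw, hgv] at hs
        omega
      · by_cases hxw' : x ≤ w
        · exfalso
          have := hcons.2.2.2 x hxK
          have hxe : x = w := by omega
          exact hxw hxe
        · rw [if_neg (fun hh => absurd ((Finset.mem_filter.1 hh).2) (by omega)),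
            if_neg (fun hh => absurd ((Finset.mem_filter.1 hh).2) (by omega))] at hs
          omega

end move

section connect

variable {P : PartitionData} {p q : ℕ}

lemma syd_eq_of_usum_eq {T T' : SYD P p q}
    (h : ∀ x ∈ P.partsSet, Usum P T.f x = Usum P T'.f x) : T = T' := by
  apply SYD.ext'
  funext x
  by_cases hx : x ∈ P.partsSet
  · have h1 := usum_split T.f hx
    have h2 := usum_split T'.f hx
    rcases (P.partsSet.filter (fun y => x < y)).eq_empty_or_nonempty with he | hne
    · rw [he] at h1 h2
      simp only [Finset.sum_empty, add_zero] at h1 h2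
      rw [← h1, ← h2, h x hx]
    · have ha1 := usum_above (P := P) T.f hne
      have ha2 := usum_above (P := P) T'.f hne
      have hmK : (P.partsSet.filter (fun y => x < y)).min' hne ∈ P.partsSet :=
        (Finset.mem_filter.1 (Finset.min'_mem _ hne)).1
      have h3 := h _ hmK
      have h4 := h x hx
      omega
  · rw [T.f_eq_zero hx, T'.f_eq_zero hx]

lemma reach_of_usum (hn : P.boxSum = p + q) :
    ∀ (N : ℕ) (T T' : SYD P p q),
      (∀ x, Bound P x → Usum P T.f x = Usum P T'.f x) →
      (∑ x ∈ P.partsSet, Nat.dist (Usum P T.f x) (Usum P T'.f x)) = N →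
      (orbitGraph P p q).Reachable T T' := by
  intro N
  induction N using Nat.strong_induction_on with
  | _ N ih =>
  intro T T' hb hsum
  by_cases hzero : ∀ x ∈ P.partsSet, Usum P T.f x = Usum P T'.f x
  · rw [syd_eq_of_usum_eq hzero]
  · push_neg at hzero
    obtain ⟨x₀, hx₀, hne⟩ := hzero
    rcases Nat.lt_or_ge (Usum P T.f x₀) (Usum P T'.f x₀) with hlt | hge
    · obtain ⟨T'', w, hadj, hwK, hUw1, hUwlt, hUother⟩ := move_exists T T' hn hb hx₀ hlt
      have hxw : ∀ x, Bound P x → x ≠ w := by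
        intro x hbx hxe
        have := hb x hbx
        rw [hxe] at this
        omega
      have hb'' : ∀ x, Bound P x → Usum P T''.f x = Usum P T'.f x := by
        intro x hbx
        rw [hUother x hbx.mem (hxw x hbx)]
        exact hb x hbx
      have hd : ∀ x ∈ P.partsSet.erase w,
          Nat.dist (Usum P T''.f x) (Usum P T'.f x)
            = Nat.dist (Usum P T.f x) (Usum P T'.f x) := by
        intro x hx
        rw [hUother x (Finset.mem_of_mem_erase hx) (Finset.ne_of_mem_erase hx)]
      have hsum1 : ∑ x ∈ P.partsSet.erase w, Nat.dist (Usum P T''.f x) (Usum P T'.f x)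
          + Nat.dist (Usum P T''.f w) (Usum P T'.f w)
          = ∑ x ∈ P.partsSet, Nat.dist (Usum P T''.f x) (Usum P T'.f x) :=
        Finset.sum_erase_add _ _ hwK
      have hsum2 : ∑ x ∈ P.partsSet.erase w, Nat.dist (Usum P T.f x) (Usum P T'.f x)
          + Nat.dist (Usum P T.f w) (Usum P T'.f w)
          = ∑ x ∈ P.partsSet, Nat.dist (Usum P T.f x) (Usum P T'.f x) :=
        Finset.sum_erase_add _ _ hwK
      rw [Finset.sum_congr rfl hd] at hsum1
      have hdw : Nat.dist (Usum P T''.f w) (Usum P T'.f w) + 1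
          = Nat.dist (Usum P T.f w) (Usum P T'.f w) := by
        rw [hUw1]
        simp only [Nat.dist]
        omega
      have hNpos : 1 ≤ N := by
        rw [← hsum, ← hsum2]
        have : 1 ≤ Nat.dist (Usum P T.f w) (Usum P T'.f w) := by
          simp only [Nat.dist]; omega
        omega
      have hrest := ih (N - 1) (by omega) T'' T' hb'' (by omega)
      exact (hadj.reachable).trans hrest
    · have hlt' : Usum P T'.f x₀ < Usum P T.f x₀ := by omega
      have hb' : ∀ x, Bound P x → Usum P T'.f x = Usum P T.f x :=
        fun x hx => (hb x hx).symm
      obtain ⟨T'', w, hadj, hwK, hUw1, hUwlt, hUother⟩ := move_exists T' T hn hb' hx₀ hlt'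
      have hxw : ∀ x, Bound P x → x ≠ w := by
        intro x hbx hxe
        have := hb x hbx
        rw [hxe] at this
        omega
      have hb'' : ∀ x, Bound P x → Usum P T.f x = Usum P T''.f x := by
        intro x hbx
        rw [hUother x hbx.mem (hxw x hbx)]
        exact hb x hbx
      have hd : ∀ x ∈ P.partsSet.erase w,
          Nat.dist (Usum P T.f x) (Usum P T''.f x)
            = Nat.dist (Usum P T.f x) (Usum P T'.f x) := by
        intro x hx
        rw [hUother x (Finset.mem_of_mem_erase hx) (Finset.ne_of_mem_erase hx)]
      have hsum1 : ∑ x ∈ P.partsSet.erase w, Nat.dist (Usum P T.f x) (Usum P T''.f x)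
          + Nat.dist (Usum P T.f w) (Usum P T''.f w)
          = ∑ x ∈ P.partsSet, Nat.dist (Usum P T.f x) (Usum P T''.f x) :=
        Finset.sum_erase_add _ _ hwK
      have hsum2 : ∑ x ∈ P.partsSet.erase w, Nat.dist (Usum P T.f x) (Usum P T'.f x)
          + Nat.dist (Usum P T.f w) (Usum P T'.f w)
          = ∑ x ∈ P.partsSet, Nat.dist (Usum P T.f x) (Usum P T'.f x) :=
        Finset.sum_erase_add _ _ hwK
      rw [Finset.sum_congr rfl hd] at hsum1
      have hdw : Nat.dist (Usum P T.f w) (Usum P T''.f w) + 1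
          = Nat.dist (Usum P T.f w) (Usum P T'.f w) := by
        rw [hUw1]
        simp only [Nat.dist]
        omega
      have hNpos : 1 ≤ N := by
        rw [← hsum, ← hsum2]
        have : 1 ≤ Nat.dist (Usum P T.f w) (Usum P T'.f w) := by
          simp only [Nat.dist]; omega
        omega
      have hrest := ih (N - 1) (by omega) T T'' hb'' (by omega)
      exact hrest.trans (hadj.symm.reachable)

lemma reach_of_bound_eq (hn : P.boxSum = p + q) (T T' : SYD P p q)
    (hb : ∀ x, Bound P x → Usum P T.f x = Usum P T'.f x) :
    (orbitGraph P p q).Reachable T T' :=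
  reach_of_usum hn _ T T' hb rfl

end connect

section structural

variable {P : PartitionData}

lemma mem_Kset_iff {j : ℕ} :
    j ∈ Kset P ↔ 1 ≤ j ∧ j ≤ P.len ∧ ¬ (Odd (P.l j) ↔ Odd (P.l (j + 1))) := by
  rw [Kset, Finset.mem_filter, Finset.mem_Icc]
  constructor
  · rintro ⟨⟨h1, h2⟩, h3⟩
    refine ⟨h1, h2, ?_⟩
    have hle := P.anti j h1
    simp only [Nat.odd_iff] at h3 ⊢
    omega
  · rintro ⟨h1, h2, h3⟩
    refine ⟨⟨h1, h2⟩, ?_⟩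
    have hle := P.anti j h1
    simp only [Nat.odd_iff] at h3 ⊢
    omega

lemma parity_step {j : ℕ} (h1 : 1 ≤ j) (h : j ∉ Kset P) :
    (Odd (P.l j) ↔ Odd (P.l (j + 1))) := by
  by_cases hj : j ≤ P.len
  · by_contra hc
    exact h (mem_Kset_iff.2 ⟨h1, hj, hc⟩)
  · rw [P.l_zero_of_gt (by omega), P.l_zero_of_gt (by omega)]

lemma parity_const {a b : ℕ} (h1 : 1 ≤ a) (hab : a ≤ b)
    (h : ∀ j, a ≤ j → j < b → j ∉ Kset P) : (Odd (P.l a) ↔ Odd (P.l b)) := by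
  induction b, hab using Nat.le_induction with
  | base => rfl
  | succ b hab ih =>
    rcases Nat.eq_or_lt_of_le hab with he | hlt
    · rw [he]
      exact parity_step (by omega) (h b (by omega) (by omega))
    · have := ih (fun j hj1 hj2 => h j hj1 (by omega))
      rw [this]
      exact parity_step (by omega) (h b (by omega) (by omega))

/-- Counting rows with a property of the row length together with a row condition. -/
lemma sum_card_fiber (pred cond : ℕ → Prop) [DecidablePred pred] [DecidablePred cond] :
    ∑ x ∈ P.partsSet.filter (fun x => pred x),
        ((Finset.Icc 1 P.len).filter (fun j => P.l j = x ∧ cond j)).card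
      = ((Finset.Icc 1 P.len).filter (fun j => pred (P.l j) ∧ cond j)).card := by
  classical
  have hmaps : ∀ j ∈ (Finset.Icc 1 P.len).filter (fun j => pred (P.l j) ∧ cond j),
      P.l j ∈ P.partsSet := by
    intro j hj
    obtain ⟨hj1, _⟩ := Finset.mem_filter.1 hj
    rw [Finset.mem_Icc] at hj1
    exact P.l_mem_partsSet hj1.1 hj1.2
  rw [Finset.card_eq_sum_card_fiberwise hmaps]
  rw [← Finset.sum_filter_add_sum_filter_not P.partsSet (fun x => pred x)]
  have hz : ∑ x ∈ P.partsSet.filter (fun x => ¬ pred x),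
      (((Finset.Icc 1 P.len).filter (fun j => pred (P.l j) ∧ cond j)).filter
        (fun j => P.l j = x)).card = 0 := by
    apply Finset.sum_eq_zero
    intro x hx
    rw [Finset.card_eq_zero, Finset.filter_eq_empty_iff]
    intro j hj hl
    obtain ⟨_, hp, _⟩ := Finset.mem_filter.1 hj
    exact (Finset.mem_filter.1 hx).2 (hl ▸ hp)
  rw [hz, add_zero]
  apply Finset.sum_congr rfl
  intro x hx
  have hpx : pred x := (Finset.mem_filter.1 hx).2
  congr 1
  ext j
  constructor
  · intro h
    obtain ⟨hj, hl, hc⟩ := Finset.mem_filter.1 h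
    exact Finset.mem_filter.2 ⟨Finset.mem_filter.2 ⟨hj, hl ▸ hpx, hc⟩, hl⟩
  · intro h
    obtain ⟨h1, hl⟩ := Finset.mem_filter.1 h
    obtain ⟨hj, _, hc⟩ := Finset.mem_filter.1 h1
    exact Finset.mem_filter.2 ⟨hj, hl, hc⟩

lemma count_rows (pred : ℕ → Prop) [DecidablePred pred] :
    ∑ x ∈ P.partsSet.filter (fun x => pred x), P.mult x
      = ((Finset.Icc 1 P.len).filter (fun j => pred (P.l j))).card := by
  classical
  have := sum_card_fiber (P := P) pred (fun _ => True)
  simp only [and_true] at this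
  rw [← this]
  apply Finset.sum_congr rfl
  intro x _
  rfl

lemma usum_anti (f : ℕ → ℕ) {x y : ℕ} (hxy : x ≤ y) : Usum P f y ≤ Usum P f x := by
  apply Finset.sum_le_sum_of_subset
  intro z hz
  rw [Finset.mem_filter] at *
  exact ⟨hz.1, by omega⟩

lemma exists_lastRow {x : ℕ} (hx : x ∈ P.partsSet) :
    ∃ r, 1 ≤ r ∧ r ≤ P.len ∧ P.l r = x ∧ P.l (r + 1) < x := by
  classical
  have hne : ((Finset.Icc 1 P.len).filter (fun j => P.l j = x)).Nonempty := by
    obtain ⟨j, h1, h2, h3⟩ := (P.mem_partsSet).1 hx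
    exact ⟨j, Finset.mem_filter.2 ⟨Finset.mem_Icc.2 ⟨h1, h2⟩, h3⟩⟩
  obtain ⟨hmem, hval⟩ := Finset.mem_filter.1 (Finset.max'_mem _ hne)
  rw [Finset.mem_Icc] at hmem
  set r := ((Finset.Icc 1 P.len).filter (fun j => P.l j = x)).max' hne with hr
  refine ⟨r, hmem.1, hmem.2, hval, ?_⟩
  have hxpos := P.pos_of_mem_partsSet hx
  by_cases hrl : r + 1 ≤ P.len
  · have hle : P.l (r + 1) ≤ x := hval ▸ P.anti r hmem.1
    rcases Nat.eq_or_lt_of_le hle with he | hlt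
    · exfalso
      have : r + 1 ∈ (Finset.Icc 1 P.len).filter (fun j => P.l j = x) :=
        Finset.mem_filter.2 ⟨Finset.mem_Icc.2 ⟨by omega, hrl⟩, he⟩
      have := Finset.le_max' _ _ this
      omega
    · exact hlt
  · rw [P.l_zero_of_gt (by omega)]
    omega

end structural

section caseB

variable {P : PartitionData} {m : ℕ} {k : ℕ → ℕ}

lemma B_m_pos (hKne : Kset P ≠ ∅) (him : (Finset.Icc 1 m).image k = Kset P) : 1 ≤ m := by
  by_contra h
  have hm : m = 0 := by omega
  apply hKne
  rw [← him, hm]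
  rfl

lemma B_ks_mem (him : (Finset.Icc 1 m).image k = Kset P) {s : ℕ}
    (h1 : 1 ≤ s) (h2 : s ≤ m) : k s ∈ Kset P := by
  rw [← him]
  exact Finset.mem_image_of_mem k (Finset.mem_Icc.2 ⟨h1, h2⟩)

lemma B_ks_facts (him : (Finset.Icc 1 m).image k = Kset P) {s : ℕ}
    (h1 : 1 ≤ s) (h2 : s ≤ m) :
    1 ≤ k s ∧ k s ≤ P.len ∧ ¬ (Odd (P.l (k s)) ↔ Odd (P.l (k s + 1))) :=
  mem_Kset_iff.1 (B_ks_mem him h1 h2)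

lemma B_k_lt (hmono : StrictMonoOn k (Set.Icc 0 m)) {a b : ℕ}
    (hab : a < b) (hb : b ≤ m) : k a < k b :=
  hmono ⟨Nat.zero_le a, by omega⟩ ⟨Nat.zero_le b, hb⟩ hab

lemma B_k_le (hmono : StrictMonoOn k (Set.Icc 0 m)) {a b : ℕ}
    (hab : a ≤ b) (hb : b ≤ m) : k a ≤ k b := by
  rcases Nat.eq_or_lt_of_le hab with he | hlt
  · rw [he]
  · exact le_of_lt (B_k_lt hmono hlt hb)

lemma B_mem_Kset_eq (hmono : StrictMonoOn k (Set.Icc 0 m))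
    (him : (Finset.Icc 1 m).image k = Kset P) {j : ℕ} (hj : j ∈ Kset P) :
    ∃ s, 1 ≤ s ∧ s ≤ m ∧ j = k s := by
  rw [← him] at hj
  obtain ⟨s, hs, he⟩ := Finset.mem_image.1 hj
  rw [Finset.mem_Icc] at hs
  exact ⟨s, hs.1, hs.2, he.symm⟩

lemma B_gap (hmono : StrictMonoOn k (Set.Icc 0 m))
    (him : (Finset.Icc 1 m).image k = Kset P) {s : ℕ} (h1 : 1 ≤ s) (h2 : s ≤ m)
    {j : ℕ} (hj : j ∈ Kset P) : ¬ (k (s - 1) < j ∧ j < k s) := by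
  rintro ⟨hlo, hhi⟩
  obtain ⟨s', hs1, hs2, rfl⟩ := B_mem_Kset_eq hmono him hj
  have hlt1 : s - 1 < s' := by
    by_contra h
    have := B_k_le hmono (show s' ≤ s - 1 by omega) (by omega)
    omega
  have hlt2 : s' < s := by
    by_contra h
    have := B_k_le hmono (show s ≤ s' by omega) hs2
    omega
  omega

lemma B_tail_K (hmono : StrictMonoOn k (Set.Icc 0 m))
    (him : (Finset.Icc 1 m).image k = Kset P) {j : ℕ} (hj : j ∈ Kset P) : j ≤ k m := by
  obtain ⟨s', hs1, hs2, rfl⟩ := B_mem_Kset_eq hmono him hj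
  exact B_k_le hmono hs2 le_rfl

lemma B_drop (him : (Finset.Icc 1 m).image k = Kset P) {s : ℕ}
    (h1 : 1 ≤ s) (h2 : s ≤ m) : P.l (k s + 1) < P.l (k s) := by
  obtain ⟨ha, hb, hc⟩ := B_ks_facts him h1 h2
  have hle := P.anti (k s) ha
  rcases Nat.eq_or_lt_of_le hle with he | hlt
  · exact absurd (by rw [he] : Odd (P.l (k s)) ↔ Odd (P.l (k s + 1))) hc
  · exact hlt

lemma B_row_iff (him : (Finset.Icc 1 m).image k = Kset P) {s : ℕ}
    (h1 : 1 ≤ s) (h2 : s ≤ m) {j : ℕ} (hj : 1 ≤ j) :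
    P.l (k s) ≤ P.l j ↔ j ≤ k s :=
  P.ge_iff_row_le (B_ks_facts him h1 h2).1 (B_drop him h1 h2) hj

lemma B_lks_mem (him : (Finset.Icc 1 m).image k = Kset P) {s : ℕ}
    (h1 : 1 ≤ s) (h2 : s ≤ m) : P.l (k s) ∈ P.partsSet :=
  P.l_mem_partsSet (B_ks_facts him h1 h2).1 (B_ks_facts him h1 h2).2.1

lemma B_l_anti (hmono : StrictMonoOn k (Set.Icc 0 m))
    (him : (Finset.Icc 1 m).image k = Kset P) {a b : ℕ}
    (ha : 1 ≤ a) (hab : a ≤ b) (hb : b ≤ m) : P.l (k b) ≤ P.l (k a) :=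
  P.l_anti' (B_ks_facts him ha (by omega)).1 (B_k_le hmono hab hb)

lemma B_l_strict (hmono : StrictMonoOn k (Set.Icc 0 m))
    (him : (Finset.Icc 1 m).image k = Kset P) {a b : ℕ}
    (ha : 1 ≤ a) (hab : a < b) (hb : b ≤ m) : P.l (k b) < P.l (k a) := by
  have h1 : k a + 1 ≤ k b := B_k_lt hmono hab hb
  have h2 : P.l (k b) ≤ P.l (k a + 1) := P.l_anti' (by have := (B_ks_facts him ha (by omega)).1; omega) h1
  have h3 := B_drop him ha (by omega)
  omega

lemma B_block_parity (hmono : StrictMonoOn k (Set.Icc 0 m))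
    (him : (Finset.Icc 1 m).image k = Kset P) {s : ℕ} (h1 : 1 ≤ s) (h2 : s ≤ m)
    {j : ℕ} (hj1 : k (s - 1) < j) (hj2 : j ≤ k s) :
    (Odd (P.l j) ↔ Odd (P.l (k s))) := by
  apply parity_const (by omega) hj2
  intro j' hj'1 hj'2 hj'K
  exact B_gap hmono him h1 h2 hj'K ⟨by omega, hj'2⟩

lemma B_tail_even (hmono : StrictMonoOn k (Set.Icc 0 m))
    (him : (Finset.Icc 1 m).image k = Kset P) {j : ℕ} (h1 : 1 ≤ j) (hj : k m < j) :
    ¬ Odd (P.l j) := by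
  by_cases hlen : j ≤ P.len
  · have hpar : (Odd (P.l j) ↔ Odd (P.l (P.len + 1))) := by
      apply parity_const h1 (by omega)
      intro j' hj'1 hj'2 hj'K
      have := B_tail_K hmono him hj'K
      omega
    rw [hpar, P.l_zero_of_gt (j := P.len + 1) (by omega)]
    simp
  · rw [P.l_zero_of_gt (j := j) (by omega)]
    simp

lemma B_bound_iff (hk0 : k 0 = 0) (hmono : StrictMonoOn k (Set.Icc 0 m))
    (him : (Finset.Icc 1 m).image k = Kset P) {x : ℕ} :
    Bound P x ↔ ∃ s, 1 ≤ s ∧ s ≤ m ∧ x = P.l (k s) := by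
  constructor
  · intro hb
    have hxK := hb.mem
    obtain ⟨r, hr1, hr2, hrx, hrdrop⟩ := exists_lastRow hxK
    rcases hb with ⟨⟨_, hmin⟩, hodd⟩ | ⟨y, ⟨_, hyK, hyx, hbet⟩, hpar⟩
    · -- min and odd: last row of x is len
      have hrlen : r = P.len := by
        by_contra hc
        have hpart : P.l (r + 1) ∈ P.partsSet := P.l_mem_partsSet (by omega) (by omega)
        have := hmin _ hpart
        omega
      have hKmem : r ∈ Kset P := by
        rw [mem_Kset_iff]
        refine ⟨hr1, hr2, ?_⟩
        rw [hrx, P.l_zero_of_gt (j := r + 1) (by omega)]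
        intro h
        have := h.mp hodd
        simp at this
      obtain ⟨s, hs1, hs2, hse⟩ := B_mem_Kset_eq hmono him hKmem
      exact ⟨s, hs1, hs2, by rw [← hse, hrx]⟩
    · -- consecutive with parity change
      have hrlen : r < P.len := by
        by_contra hc
        have : P.len < r + 1 := by omega
        obtain ⟨j', hj'1, hj'2, hj'⟩ := (P.mem_partsSet).1 hyK
        have : x ≤ P.l j' := by
          have := P.l_anti' hj'1 (show j' ≤ r by omega)
          omega
        omega
      have hylr : y = P.l (r + 1) := by
        have hpart : P.l (r + 1) ∈ P.partsSet := P.l_mem_partsSet (by omega) (by omega)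
        have hlty : y ≤ P.l (r + 1) := by
          obtain ⟨j', hj'1, hj'2, hj'⟩ := (P.mem_partsSet).1 hyK
          have hj'r : r < j' := by
            by_contra hc
            have := P.l_anti' hj'1 (show j' ≤ r by omega)
            omega
          have := P.l_anti' (show 1 ≤ r + 1 by omega) (show r + 1 ≤ j' by omega)
          omega
        by_contra hne
        exact hbet _ hpart ⟨by omega, by omega⟩
      have hKmem : r ∈ Kset P := by
        rw [mem_Kset_iff]
        refine ⟨hr1, hr2, ?_⟩
        rw [hrx, ← hylr]
        exact hpar
      obtain ⟨s, hs1, hs2, hse⟩ := B_mem_Kset_eq hmono him hKmem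
      exact ⟨s, hs1, hs2, by rw [← hse, hrx]⟩
  · rintro ⟨s, hs1, hs2, rfl⟩
    obtain ⟨ha, hb', hc⟩ := B_ks_facts him hs1 hs2
    by_cases hlen : k s = P.len
    · left
      constructor
      · refine ⟨B_lks_mem him hs1 hs2, fun z hz => ?_⟩
        obtain ⟨j', hj'1, hj'2, rfl⟩ := (P.mem_partsSet).1 hz
        exact P.l_anti' hj'1 (by omega)
      · rw [P.l_zero_of_gt (j := k s + 1) (by omega)] at hc
        by_contra h
        apply hc
        exact ⟨fun hx => absurd hx h, fun hx => absurd hx (by rw [Nat.odd_iff]; omega)⟩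
    · right
      refine ⟨P.l (k s + 1), ⟨B_lks_mem him hs1 hs2, P.l_mem_partsSet (j := k s + 1) (by omega) (by omega),
        B_drop him hs1 hs2, ?_⟩, hc⟩
      intro z hz hzb
      obtain ⟨j', hj'1, hj'2, rfl⟩ := (P.mem_partsSet).1 hz
      have h1 : ¬ (j' ≤ k s) := by
        intro h
        have := (B_row_iff him hs1 hs2 (j := j') hj'1).2 h
        omega
      have := P.l_anti' (show 1 ≤ k s + 1 by omega) (show k s + 1 ≤ j' by omega)
      omega

end caseB

/-- partial `+`-row counts at the block boundaries. -/
noncomputable def Vk (P : PartitionData) (k : ℕ → ℕ) (f : ℕ → ℕ) (s : ℕ) : ℕ :=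
  if s = 0 then 0 else Usum P f (P.l (k s))

/-- the parts belonging to the `s`-th block. -/
noncomputable def Blk (P : PartitionData) (k : ℕ → ℕ) (s : ℕ) : Finset ℕ :=
  P.partsSet.filter (fun x => P.l (k s) ≤ x ∧ (2 ≤ s → x < P.l (k (s - 1))))

/-- the invariant of a diagram: the tuple of block sums. -/
noncomputable def invp (P : PartitionData) (m : ℕ) (k : ℕ → ℕ) (f : ℕ → ℕ) (s : ℕ) : ℕ :=
  if 1 ≤ s ∧ s ≤ m then Vk P k f s - Vk P k f (s - 1) else 0

section blocks

variable {P : PartitionData} {m : ℕ} {k : ℕ → ℕ}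

lemma Vk_split (hmono : StrictMonoOn k (Set.Icc 0 m))
    (him : (Finset.Icc 1 m).image k = Kset P) (f : ℕ → ℕ) {s : ℕ}
    (h1 : 1 ≤ s) (h2 : s ≤ m) :
    Vk P k f s = Vk P k f (s - 1) + ∑ x ∈ Blk P k s, f x := by
  classical
  rcases Nat.eq_or_lt_of_le h1 with hs1 | hs2
  · rw [← hs1]
    rw [Vk, Vk, if_neg (by omega), if_pos (by omega), zero_add]
    rw [Usum, Blk]
    apply Finset.sum_congr _ (fun _ _ => rfl)
    apply Finset.filter_congr
    intro x _
    simp only [show ¬ (2 ≤ 1) by omega, false_implies, and_true]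
  · have hs2' : 2 ≤ s := hs2
    have hle : P.l (k s) ≤ P.l (k (s - 1)) :=
      B_l_anti hmono him (by omega) (by omega) h2
    rw [Vk, Vk, if_neg (by omega), if_neg (by omega)]
    rw [Usum, Usum]
    rw [← Finset.sum_filter_add_sum_filter_not
      (P.partsSet.filter (fun y => P.l (k s) ≤ y)) (fun x => P.l (k (s - 1)) ≤ x) f]
    congr 1
    · apply Finset.sum_congr _ (fun _ _ => rfl)
      ext x
      constructor
      · intro hx
        obtain ⟨hx1, hx2⟩ := Finset.mem_filter.1 hx
        exact Finset.mem_filter.2 ⟨(Finset.mem_filter.1 hx1).1, hx2⟩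
      · intro hx
        obtain ⟨hx1, hx2⟩ := Finset.mem_filter.1 hx
        exact Finset.mem_filter.2 ⟨Finset.mem_filter.2 ⟨hx1, by omega⟩, hx2⟩
    · apply Finset.sum_congr _ (fun _ _ => rfl)
      ext x
      constructor
      · intro hx
        obtain ⟨hx1, hx2⟩ := Finset.mem_filter.1 hx
        obtain ⟨hx3, hx4⟩ := Finset.mem_filter.1 hx1
        exact Finset.mem_filter.2 ⟨hx3, hx4, fun _ => by omega⟩
      · intro hx
        obtain ⟨hx1, hx2, hx3⟩ := Finset.mem_filter.1 hx
        exact Finset.mem_filter.2 ⟨Finset.mem_filter.2 ⟨hx1, hx2⟩, by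
          have := hx3 hs2'
          omega⟩

lemma Vk_mono (hmono : StrictMonoOn k (Set.Icc 0 m))
    (him : (Finset.Icc 1 m).image k = Kset P) (f : ℕ → ℕ) {s : ℕ}
    (h1 : 1 ≤ s) (h2 : s ≤ m) : Vk P k f (s - 1) ≤ Vk P k f s := by
  rw [Vk_split hmono him f h1 h2]
  omega

lemma Blk_mult (hk0 : k 0 = 0) (hmono : StrictMonoOn k (Set.Icc 0 m))
    (him : (Finset.Icc 1 m).image k = Kset P) {s : ℕ} (h1 : 1 ≤ s) (h2 : s ≤ m) :
    ∑ x ∈ Blk P k s, P.mult x = k s - k (s - 1) := by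
  classical
  rw [Blk, count_rows (P := P) (fun x => P.l (k s) ≤ x ∧ (2 ≤ s → x < P.l (k (s - 1))))]
  have hset : (Finset.Icc 1 P.len).filter
      (fun j => P.l (k s) ≤ P.l j ∧ (2 ≤ s → P.l j < P.l (k (s - 1))))
      = Finset.Icc (k (s - 1) + 1) (k s) := by
    ext j
    simp only [Finset.mem_filter, Finset.mem_Icc]
    constructor
    · rintro ⟨⟨hj1, hj2⟩, hj3, hj4⟩
      have hjks : j ≤ k s := (B_row_iff him h1 h2 hj1).1 hj3
      rcases Nat.eq_or_lt_of_le h1 with hs1 | hs2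
      · subst hs1
        rw [hk0]
        omega
      · have hlt := hj4 hs2
        have hnle : ¬ (j ≤ k (s - 1)) := by
          intro hc
          have := (B_row_iff him (s := s - 1) (by omega) (by omega) (j := j) hj1).2 hc
          omega
        omega
    · rintro ⟨hj1, hj2⟩
      have hksl : k s ≤ P.len := (B_ks_facts him h1 h2).2.1
      have hj0 : 1 ≤ j := by omega
      refine ⟨⟨hj0, by omega⟩, (B_row_iff him h1 h2 hj0).2 hj2, fun hs2 => ?_⟩
      have : ¬ (P.l (k (s - 1)) ≤ P.l j) := by
        intro hc
        have := (B_row_iff him (by omega) (by omega) (j := j) hj0).1 hc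
        omega
      omega
  rw [hset, Nat.card_Icc]
  omega

lemma Vk_diff_le (hk0 : k 0 = 0) (hmono : StrictMonoOn k (Set.Icc 0 m))
    (him : (Finset.Icc 1 m).image k = Kset P) (f : ℕ → ℕ)
    (hf : ∀ x, f x ≤ P.mult x) {s : ℕ} (h1 : 1 ≤ s) (h2 : s ≤ m) :
    Vk P k f s ≤ Vk P k f (s - 1) + (k s - k (s - 1)) := by
  rw [Vk_split hmono him f h1 h2]
  have hle : ∑ x ∈ Blk P k s, f x ≤ ∑ x ∈ Blk P k s, P.mult x :=
    Finset.sum_le_sum (fun x _ => hf x)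
  rw [Blk_mult hk0 hmono him h1 h2] at hle
  omega

lemma Blk_row (hk0 : k 0 = 0) (hmono : StrictMonoOn k (Set.Icc 0 m))
    (him : (Finset.Icc 1 m).image k = Kset P) {s : ℕ} (h1 : 1 ≤ s) (h2 : s ≤ m)
    {x : ℕ} (hx : x ∈ Blk P k s) :
    ∃ j, 1 ≤ j ∧ j ≤ P.len ∧ P.l j = x ∧ k (s - 1) < j ∧ j ≤ k s := by
  obtain ⟨hxK, hx1, hx2⟩ := Finset.mem_filter.1 hx
  obtain ⟨j, hj1, hj2, hj3⟩ := (P.mem_partsSet).1 hxK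
  refine ⟨j, hj1, hj2, hj3, ?_, (B_row_iff him h1 h2 hj1).1 (by omega)⟩
  rcases Nat.eq_or_lt_of_le h1 with hs1 | hs2
  · subst hs1
    rw [hk0]
    omega
  · have hlt := hx2 hs2
    by_contra hc
    have := (B_row_iff him (s := s - 1) (by omega) (by omega) (j := j) hj1).2 (by omega)
    omega

lemma Blk_parity (hk0 : k 0 = 0) (hmono : StrictMonoOn k (Set.Icc 0 m))
    (him : (Finset.Icc 1 m).image k = Kset P) {s : ℕ} (h1 : 1 ≤ s) (h2 : s ≤ m)
    {x : ℕ} (hx : x ∈ Blk P k s) : (Odd x ↔ Odd (P.l (k s))) := by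
  obtain ⟨j, hj1, hj2, hj3, hj4, hj5⟩ := Blk_row hk0 hmono him h1 h2 hx
  rw [← hj3]
  exact B_block_parity hmono him h1 h2 hj4 hj5

lemma Blk_pdisjoint (hmono : StrictMonoOn k (Set.Icc 0 m))
    (him : (Finset.Icc 1 m).image k = Kset P) {s1 s2 : ℕ}
    (hs1 : 1 ≤ s1) (hs2 : s2 ≤ m) (hlt : s1 < s2) :
    Disjoint (Blk P k s1) (Blk P k s2) := by
  rw [Finset.disjoint_left]
  intro x hx1 hx2
  obtain ⟨_, hb1, _⟩ := Finset.mem_filter.1 hx1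
  obtain ⟨_, _, hb2⟩ := Finset.mem_filter.1 hx2
  have h2 : x < P.l (k (s2 - 1)) := hb2 (by omega)
  have h3 : P.l (k (s2 - 1)) ≤ P.l (k s1) :=
    B_l_anti hmono him hs1 (by omega) (by omega)
  omega

lemma odd_eq_biUnion (hk0 : k 0 = 0) (hKne : Kset P ≠ ∅)
    (hmono : StrictMonoOn k (Set.Icc 0 m))
    (him : (Finset.Icc 1 m).image k = Kset P) :
    P.partsSet.filter (fun x => Odd x)
      = ((Finset.Icc 1 m).filter (fun s => Odd (P.l (k s)))).biUnion
          (fun s => Blk P k s) := by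
  classical
  have hm1 := B_m_pos hKne him
  ext x
  simp only [Finset.mem_filter, Finset.mem_biUnion]
  constructor
  · rintro ⟨hxK, hodd⟩
    obtain ⟨j, hj1, hj2, hj3⟩ := (P.mem_partsSet).1 hxK
    have hjkm : j ≤ k m := by
      by_contra hc
      exact B_tail_even hmono him hj1 (by omega) (hj3 ▸ hodd)
    have hsne : ((Finset.Icc 1 m).filter (fun s => j ≤ k s)).Nonempty :=
      ⟨m, Finset.mem_filter.2 ⟨Finset.mem_Icc.2 ⟨hm1, le_rfl⟩, hjkm⟩⟩
    obtain ⟨hsmem, hsle⟩ := Finset.mem_filter.1 (Finset.min'_mem _ hsne)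
    rw [Finset.mem_Icc] at hsmem
    set s := ((Finset.Icc 1 m).filter (fun s => j ≤ k s)).min' hsne with hsdef
    have hks1 : k (s - 1) < j := by
      rcases Nat.eq_or_lt_of_le hsmem.1 with he | hlt
      · rw [← he, hk0]; omega
      · by_contra hc
        have : s - 1 ∈ (Finset.Icc 1 m).filter (fun s => j ≤ k s) :=
          Finset.mem_filter.2 ⟨Finset.mem_Icc.2 ⟨by omega, by omega⟩, by omega⟩
        have := Finset.min'_le _ _ this
        omega
    have hpar := B_block_parity hmono him hsmem.1 hsmem.2 hks1 hsle
    refine ⟨s, ⟨Finset.mem_Icc.2 hsmem, ?_⟩, ?_⟩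
    · rw [← hpar, hj3]; exact hodd
    · refine Finset.mem_filter.2 ⟨hxK, ?_, fun hs2 => ?_⟩
      · rw [← hj3]
        exact (B_row_iff him hsmem.1 hsmem.2 hj1).2 hsle
      · rw [← hj3]
        by_contra hc
        have := (B_row_iff him (s := s - 1) (by omega) (by omega) (j := j) hj1).1 (by omega)
        omega
  · rintro ⟨s, ⟨hsmem, hsodd⟩, hxB⟩
    rw [Finset.mem_Icc] at hsmem
    refine ⟨(Finset.mem_filter.1 hxB).1, ?_⟩
    rw [Blk_parity hk0 hmono him hsmem.1 hsmem.2 hxB]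
    exact hsodd

lemma odd_sum_eq (hk0 : k 0 = 0) (hKne : Kset P ≠ ∅)
    (hmono : StrictMonoOn k (Set.Icc 0 m))
    (him : (Finset.Icc 1 m).image k = Kset P) (f : ℕ → ℕ) :
    ∑ x ∈ P.partsSet.filter (fun x => Odd x), f x
      = ∑ s ∈ (Finset.Icc 1 m).filter (fun s => Odd (P.l (k s))),
          (Vk P k f s - Vk P k f (s - 1)) := by
  classical
  rw [odd_eq_biUnion hk0 hKne hmono him]
  rw [Finset.sum_biUnion]
  · apply Finset.sum_congr rfl
    intro s hs
    obtain ⟨hsmem, _⟩ := Finset.mem_filter.1 hs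
    rw [Finset.mem_Icc] at hsmem
    have := Vk_split hmono him f hsmem.1 hsmem.2
    omega
  · intro s1 h1 s2 h2 hne
    obtain ⟨hm1, _⟩ := Finset.mem_filter.1 (Finset.mem_coe.1 h1)
    obtain ⟨hm2, _⟩ := Finset.mem_filter.1 (Finset.mem_coe.1 h2)
    rw [Finset.mem_Icc] at hm1 hm2
    show Disjoint (Blk P k s1) (Blk P k s2)
    rcases Nat.lt_or_ge s1 s2 with h | h
    · exact Blk_pdisjoint hmono him hm1.1 hm2.2 h
    · exact (Blk_pdisjoint hmono him hm2.1 hm1.2 (by omega)).symm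

end blocks

section fof

variable {P : PartitionData} {m : ℕ} {k : ℕ → ℕ}

lemma fOf_le_mult (ps : ℕ → ℕ) (i : ℕ) : fOf P m k ps i ≤ P.mult i := by
  rw [fOf, PartitionData.mult]
  apply Finset.card_le_card
  intro j hj
  simp only [Finset.mem_filter] at hj ⊢
  exact ⟨hj.1, hj.2.1⟩

lemma fOf_usum (hk0 : k 0 = 0) (hmono : StrictMonoOn k (Set.Icc 0 m))
    (him : (Finset.Icc 1 m).image k = Kset P) (ps : ℕ → ℕ)
    (hps : ∀ s', 1 ≤ s' → s' ≤ m → ps s' ≤ k s' - k (s' - 1)) {s : ℕ}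
    (h1 : 1 ≤ s) (h2 : s ≤ m) :
    Usum P (fOf P m k ps) (P.l (k s)) = ∑ s' ∈ Finset.Icc 1 s, ps s' := by
  classical
  have hfib := sum_card_fiber (P := P) (fun x => P.l (k s) ≤ x)
    (fun j => ∃ s' ∈ Finset.Icc 1 m, k (s' - 1) < j ∧ j ≤ k (s' - 1) + ps s')
  have hL : Usum P (fOf P m k ps) (P.l (k s))
      = ∑ x ∈ P.partsSet.filter (fun x => P.l (k s) ≤ x),
        ((Finset.Icc 1 P.len).filter (fun j => P.l j = x ∧
          ∃ s' ∈ Finset.Icc 1 m, k (s' - 1) < j ∧ j ≤ k (s' - 1) + ps s')).card := by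
    rw [Usum]
    apply Finset.sum_congr rfl
    intro x _
    rw [fOf]
  rw [hL, hfib]
  have hset : (Finset.Icc 1 P.len).filter (fun j => P.l (k s) ≤ P.l j ∧
        ∃ s' ∈ Finset.Icc 1 m, k (s' - 1) < j ∧ j ≤ k (s' - 1) + ps s')
      = (Finset.Icc 1 s).biUnion
          (fun s' => Finset.Ioc (k (s' - 1)) (k (s' - 1) + ps s')) := by
    ext j
    simp only [Finset.mem_filter, Finset.mem_biUnion, Finset.mem_Icc, Finset.mem_Ioc]
    constructor
    · rintro ⟨⟨hj1, hj2⟩, hj3, s', ⟨hs'1, hs'2⟩, hj4, hj5⟩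
      have hjks : j ≤ k s := (B_row_iff him h1 h2 hj1).1 hj3
      refine ⟨s', ⟨hs'1, ?_⟩, hj4, hj5⟩
      by_contra hc
      have : k s ≤ k (s' - 1) := B_k_le hmono (by omega) (by omega)
      omega
    · rintro ⟨s', ⟨hs'1, hs'2⟩, hj4, hj5⟩
      have hs'm : s' ≤ m := by omega
      have hbox := hps s' hs'1 hs'm
      have hk1 : k (s' - 1) ≤ k s' := B_k_le hmono (by omega) hs'm
      have hk2 : k s' ≤ k s := B_k_le hmono (by omega) h2
      have hkslen : k s ≤ P.len := (B_ks_facts him h1 h2).2.1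
      have hj1 : 1 ≤ j := by omega
      refine ⟨⟨hj1, by omega⟩, (B_row_iff him h1 h2 hj1).2 (by omega), s',
        ⟨hs'1, hs'm⟩, hj4, hj5⟩
  rw [hset, Finset.card_biUnion]
  · apply Finset.sum_congr rfl
    intro s' _
    rw [Nat.card_Ioc]
    omega
  · intro s1 hs1 s2 hs2 hne
    rw [Finset.coe_Icc, Set.mem_Icc] at hs1 hs2
    have key : ∀ a b : ℕ, 1 ≤ a → b ≤ s → a < b →
        Disjoint (Finset.Ioc (k (a - 1)) (k (a - 1) + ps a))
          (Finset.Ioc (k (b - 1)) (k (b - 1) + ps b)) := by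
      intro a b ha hb hab
      rw [Finset.disjoint_left]
      intro j hj1 hj2
      rw [Finset.mem_Ioc] at hj1 hj2
      have hboxa := hps a ha (by omega)
      have h3 : k a ≤ k (b - 1) := B_k_le hmono (by omega) (by omega)
      have h4 : k (a - 1) ≤ k a := B_k_le hmono (by omega) (by omega)
      omega
    rcases Nat.lt_or_ge s1 s2 with h | h
    · exact key s1 s2 hs1.1 hs2.2 h
    · exact (key s2 s1 hs2.1 hs1.2 (by omega)).symm

lemma Vk_fOf (hk0 : k 0 = 0) (hmono : StrictMonoOn k (Set.Icc 0 m))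
    (him : (Finset.Icc 1 m).image k = Kset P) (ps : ℕ → ℕ)
    (hps : ∀ s', 1 ≤ s' → s' ≤ m → ps s' ≤ k s' - k (s' - 1)) {s : ℕ} (h2 : s ≤ m) :
    Vk P k (fOf P m k ps) s = ∑ s' ∈ Finset.Icc 1 s, ps s' := by
  rcases Nat.eq_zero_or_pos s with hs0 | hs1
  · subst hs0
    simp [Vk]
  · rw [Vk, if_neg (by omega)]
    exact fOf_usum hk0 hmono him ps hps hs1 h2

lemma Icc_sum_succ (g : ℕ → ℕ) {s : ℕ} (h : 1 ≤ s) :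
    ∑ s' ∈ Finset.Icc 1 s, g s' = (∑ s' ∈ Finset.Icc 1 (s - 1), g s') + g s := by
  have : Finset.Icc 1 s = insert s (Finset.Icc 1 (s - 1)) := by
    ext j
    simp only [Finset.mem_Icc, Finset.mem_insert]
    omega
  rw [this, Finset.sum_insert (by simp only [Finset.mem_Icc]; omega)]
  ring

lemma invp_fOf (hk0 : k 0 = 0) (hmono : StrictMonoOn k (Set.Icc 0 m))
    (him : (Finset.Icc 1 m).image k = Kset P) (ps : ℕ → ℕ)
    (hps0 : ∀ s, ¬ (1 ≤ s ∧ s ≤ m) → ps s = 0)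
    (hps : ∀ s', 1 ≤ s' → s' ≤ m → ps s' ≤ k s' - k (s' - 1)) :
    invp P m k (fOf P m k ps) = ps := by
  funext s
  rw [invp]
  by_cases hs : 1 ≤ s ∧ s ≤ m
  · rw [if_pos hs, Vk_fOf hk0 hmono him ps hps hs.2,
      Vk_fOf hk0 hmono him ps hps (show s - 1 ≤ m by omega),
      Icc_sum_succ ps hs.1]
    omega
  · rw [if_neg hs, hps0 s hs]

end fof

section caseA

variable {P : PartitionData}

lemma A_even (hKe : Kset P = ∅) {x : ℕ} (hx : x ∈ P.partsSet) : ¬ Odd x := by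
  obtain ⟨j, hj1, hj2, rfl⟩ := (P.mem_partsSet).1 hx
  have hpar := parity_const (P := P) hj1 (show j ≤ P.len + 1 by omega)
    (fun j' _ _ => by rw [hKe]; exact Finset.notMem_empty j')
  rw [P.l_zero_of_gt (j := P.len + 1) (by omega)] at hpar
  intro hodd
  have := hpar.mp hodd
  simp at this

lemma A_oddCount (hKe : Kset P = ∅) : P.oddCount = 0 := by
  rw [PartitionData.oddCount, Finset.card_eq_zero, Finset.filter_eq_empty_iff]
  intro j hj
  rw [Finset.mem_Icc] at hj
  exact A_even hKe (P.l_mem_partsSet hj.1 hj.2)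

lemma A_oddZ (hKe : Kset P = ∅) (f : ℕ → ℕ) : oddZ P f = 0 := by
  rw [oddZ]
  rw [Finset.filter_eq_empty_iff.2 (fun x hx => A_even hKe hx)]
  rfl

lemma A_notBound (hKe : Kset P = ∅) (x : ℕ) : ¬ Bound P x := by
  rintro (⟨⟨hmem, _⟩, hodd⟩ | ⟨j, ⟨hxm, hjm, _, _⟩, hpar⟩)
  · exact A_even hKe hmem hodd
  · exact hpar ⟨fun h => absurd h (A_even hKe hxm), fun h => absurd h (A_even hKe hjm)⟩

variable {p q m : ℕ} {k : ℕ → ℕ}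

lemma A_Pset_mem (hKe : Kset P = ∅) (hm : m = 1) (hk1 : k 1 = 0) {ps : ℕ → ℕ}
    (h : ps ∈ Pset P p q m k) : ps = (fun _ => 0) ∧ p = q := by
  obtain ⟨h0, hb, hs⟩ := h
  have hfe : (Finset.Icc 1 m).filter (fun s => 1 ≤ k s ∧ Odd (P.l (k s))) = ∅ := by
    rw [Finset.filter_eq_empty_iff]
    intro s hsm
    rw [hm, Finset.mem_Icc] at hsm
    have : s = 1 := by omega
    rw [this, hk1]
    rintro ⟨h1, _⟩
    omega
  rw [hfe, Finset.sum_empty, mul_zero, A_oddCount hKe] at hs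
  constructor
  · funext s
    by_cases hs1 : 1 ≤ s ∧ s ≤ m
    · have hse : s = 1 := by omega
      have := hb s hs1.1 hs1.2
      rw [hse] at this ⊢
      simp only [hk1] at this
      omega
    · exact h0 s hs1
  · omega

lemma A_Pset_zero_mem (hKe : Kset P = ∅) (hm : m = 1) (hk1 : k 1 = 0) (hpq : p = q) :
    (fun _ => (0 : ℕ)) ∈ Pset P p q m k := by
  refine ⟨fun s _ => rfl, fun s _ _ => Nat.zero_le _, ?_⟩
  rw [A_oddCount hKe]
  have : ∑ s ∈ (Finset.Icc 1 m).filter (fun s => 1 ≤ k s ∧ Odd (P.l (k s))),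
      ((0 : ℕ) : ℤ) = 0 := Finset.sum_const_zero
  rw [this, hpq]
  ring

end caseA

section assembly

variable {P : PartitionData} {p q m : ℕ} {k : ℕ → ℕ}

lemma assembly
    (inv : SYD P p q → (ℕ → ℕ))
    (hinv1 : ∀ T, inv T ∈ Pset P p q m k)
    (hinv2 : ∀ T T', (orbitGraph P p q).Reachable T T' → inv T = inv T')
    (hrep : ∀ ps ∈ Pset P p q m k, ∃ Tp : SYD P p q,
       (∀ i, Tp.f i = fOf P m k ps i) ∧ inv Tp = ps)
    (hreach : ∀ (T Tp : SYD P p q), (∀ i, Tp.f i = fOf P m k (inv T) i) →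
       (orbitGraph P p q).Reachable T Tp) :
    (∀ c : (orbitGraph P p q).ConnectedComponent,
      ∃! T : SYD P p q,
        (∃ ps ∈ Pset P p q m k, ∀ i, T.f i = fOf P m k ps i) ∧
          (orbitGraph P p q).connectedComponentMk T = c) ∧
    Nat.card (orbitGraph P p q).ConnectedComponent = (Pset P p q m k).ncard := by
  classical
  have huniqf : ∀ (T : SYD P p q) ps, ps ∈ Pset P p q m k →
      (∀ i, T.f i = fOf P m k ps i) → inv T = ps := by
    intro T ps hps hf
    obtain ⟨Tp, hTpf, hTpinv⟩ := hrep ps hps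
    have hTe : T = Tp := SYD.ext' (funext fun i => (hf i).trans (hTpf i).symm)
    rw [hTe, hTpinv]
  constructor
  · intro c
    obtain ⟨T₀, hT₀⟩ := c.exists_rep
    obtain ⟨Tp, hTpf, hTpinv⟩ := hrep (inv T₀) (hinv1 T₀)
    have hreachTp : (orbitGraph P p q).Reachable T₀ Tp := hreach T₀ Tp hTpf
    refine ⟨Tp, ⟨⟨inv T₀, hinv1 T₀, hTpf⟩, ?_⟩, ?_⟩
    · rw [← hT₀]
      exact SimpleGraph.ConnectedComponent.sound hreachTp.symm
    · rintro T₁ ⟨⟨ps₁, hps₁, hf₁⟩, hc₁⟩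
      have hmkTp : (orbitGraph P p q).connectedComponentMk Tp = c := by
        rw [← hT₀]
        exact SimpleGraph.ConnectedComponent.sound hreachTp.symm
      have hreach₁ : (orbitGraph P p q).Reachable T₁ Tp :=
        SimpleGraph.ConnectedComponent.exact (hc₁.trans hmkTp.symm)
      have h1 : inv T₁ = ps₁ := huniqf T₁ ps₁ hps₁ hf₁
      have h2 : inv T₁ = inv Tp := hinv2 _ _ hreach₁
      apply SYD.ext'
      funext i
      rw [hf₁ i, hTpf i, ← h1, h2, hTpinv]
  · have hbij : Function.Bijective
        (fun x : ↥(Pset P p q m k) =>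
          (orbitGraph P p q).connectedComponentMk (Classical.choose (hrep x.1 x.2))) := by
      constructor
      · rintro ⟨ps₁, hps₁⟩ ⟨ps₂, hps₂⟩ he
        have hsp₁ := Classical.choose_spec (hrep ps₁ hps₁)
        have hsp₂ := Classical.choose_spec (hrep ps₂ hps₂)
        have hre := SimpleGraph.ConnectedComponent.exact he
        have := hinv2 _ _ hre
        rw [hsp₁.2, hsp₂.2] at this
        exact Subtype.ext this
      · intro c
        obtain ⟨T₀, hT₀⟩ := c.exists_rep
        refine ⟨⟨inv T₀, hinv1 T₀⟩, ?_⟩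
        have hsp := Classical.choose_spec (hrep (inv T₀) (hinv1 T₀))
        have hre : (orbitGraph P p q).Reachable T₀ _ := hreach T₀ _ hsp.1
        rw [← hT₀]
        exact SimpleGraph.ConnectedComponent.sound hre.symm
    rw [← Nat.card_coe_set_eq]
    exact (Nat.card_congr (Equiv.ofBijective _ hbij)).symm

end assembly

section finalB

variable {P : PartitionData} {m : ℕ} {k : ℕ → ℕ}

lemma invp_odd_sum (hk0 : k 0 = 0) (hKne : Kset P ≠ ∅)
    (hmono : StrictMonoOn k (Set.Icc 0 m))
    (him : (Finset.Icc 1 m).image k = Kset P) (f : ℕ → ℕ) :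
    ∑ s ∈ (Finset.Icc 1 m).filter (fun s => 1 ≤ k s ∧ Odd (P.l (k s))),
        ((invp P m k f s : ℤ))
      = oddZ P f := by
  classical
  have hfe : (Finset.Icc 1 m).filter (fun s => 1 ≤ k s ∧ Odd (P.l (k s)))
      = (Finset.Icc 1 m).filter (fun s => Odd (P.l (k s))) := by
    apply Finset.filter_congr
    intro s hs
    rw [Finset.mem_Icc] at hs
    exact and_iff_right (B_ks_facts him hs.1 hs.2).1
  rw [hfe]
  have hmid : ∑ s ∈ (Finset.Icc 1 m).filter (fun s => Odd (P.l (k s))), invp P m k f s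
      = ∑ x ∈ P.partsSet.filter (fun x => Odd x), f x := by
    rw [odd_sum_eq hk0 hKne hmono him f]
    apply Finset.sum_congr rfl
    intro s hs
    obtain ⟨hs1, _⟩ := Finset.mem_filter.1 hs
    rw [Finset.mem_Icc] at hs1
    rw [invp, if_pos ⟨hs1.1, hs1.2⟩]
  calc ∑ s ∈ (Finset.Icc 1 m).filter (fun s => Odd (P.l (k s))), ((invp P m k f s : ℤ))
      = ((∑ s ∈ (Finset.Icc 1 m).filter (fun s => Odd (P.l (k s))), invp P m k f s : ℕ) : ℤ) := by
        push_cast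
        rfl
    _ = ((∑ x ∈ P.partsSet.filter (fun x => Odd x), f x : ℕ) : ℤ) := by rw [hmid]
    _ = oddZ P f := by rw [oddZ]; push_cast; rfl

lemma invp_partial (hmono : StrictMonoOn k (Set.Icc 0 m))
    (him : (Finset.Icc 1 m).image k = Kset P) (f : ℕ → ℕ) :
    ∀ s, s ≤ m → ∑ s' ∈ Finset.Icc 1 s, invp P m k f s' = Vk P k f s := by
  intro s
  induction s with
  | zero => intro _; simp [Vk]
  | succ n ihn =>
    intro hs
    rw [Icc_sum_succ _ (by omega)]
    simp only [Nat.add_sub_cancel]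
    rw [ihn (by omega), invp, if_pos ⟨by omega, hs⟩]
    have hmn := Vk_mono hmono him f (s := n + 1) (by omega) hs
    simp only [Nat.add_sub_cancel] at hmn ⊢
    omega

end finalB

theorem stmt5' (P : PartitionData) (p q m : ℕ) (k : ℕ → ℕ)
    (hn : P.boxSum = p + q) (hk0 : k 0 = 0)
    (hk : (Kset P = ∅ ∧ m = 1 ∧ k 1 = 0) ∨
      (Kset P ≠ ∅ ∧ StrictMonoOn k (Set.Icc 0 m) ∧
        (Finset.Icc 1 m).image k = Kset P)) :
    (∀ c : (orbitGraph P p q).ConnectedComponent,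
      ∃! T : SYD P p q,
        (∃ ps ∈ Pset P p q m k, ∀ i, T.f i = fOf P m k ps i) ∧
          (orbitGraph P p q).connectedComponentMk T = c) ∧
    Nat.card (orbitGraph P p q).ConnectedComponent = (Pset P p q m k).ncard := by
  classical
  rcases hk with ⟨hKe, hm, hk1⟩ | ⟨hKne, hmono, him⟩
  · -- all parts even
    apply assembly (inv := fun _ => (fun _ => 0))
    · intro T
      have hspec := T.oddZ_spec
      rw [A_oddZ hKe, A_oddCount hKe] at hspec
      have hpq : p = q := by omega
      exact A_Pset_zero_mem hKe hm hk1 hpq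
    · intro T T' _
      rfl
    · intro ps hps
      obtain ⟨hps0, hpq⟩ := A_Pset_mem hKe hm hk1 hps
      refine ⟨mkSYD (fOf P m k ps) (fOf_le_mult ps) hn ?_, fun i => rfl, hps0.symm⟩
      rw [A_oddZ hKe, A_oddCount hKe, hpq]
      ring
    · intro T Tp _
      exact reach_of_bound_eq hn T Tp (fun x hbx => absurd hbx (A_notBound hKe x))
  · -- there are odd parts
    have hm1 := B_m_pos hKne him
    have hVdiff : ∀ (f : ℕ → ℕ), (∀ x, f x ≤ P.mult x) → ∀ s', 1 ≤ s' → s' ≤ m →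
        invp P m k f s' ≤ k s' - k (s' - 1) := by
      intro f hf s' h1 h2
      rw [invp, if_pos ⟨h1, h2⟩]
      have := Vk_diff_le hk0 hmono him f hf h1 h2
      omega
    apply assembly (inv := fun T => invp P m k T.f)
    · intro T
      refine ⟨fun s hs => by rw [invp, if_neg hs], hVdiff T.f T.le_mult, ?_⟩
      rw [invp_odd_sum hk0 hKne hmono him T.f]
      exact T.oddZ_spec
    · intro T T' hre
      have hV0 : ∀ s', s' ≤ m → Vk P k T.f s' = Vk P k T'.f s' := by
        intro s' h2'
        rcases Nat.eq_zero_or_pos s' with h0 | h1'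
        · subst h0; rfl
        · rw [Vk, Vk, if_neg (by omega), if_neg (by omega)]
          exact reach_usum hre _ ((B_bound_iff hk0 hmono him).2 ⟨s', h1', h2', rfl⟩)
      funext s
      rw [invp, invp]
      by_cases hs : 1 ≤ s ∧ s ≤ m
      · rw [if_pos hs, if_pos hs, hV0 s hs.2, hV0 (s - 1) (by omega)]
      · rw [if_neg hs, if_neg hs]
    · intro ps hps
      obtain ⟨hps0, hpsb, hpss⟩ := hps
      have hodd : 2 * oddZ P (fOf P m k ps) - P.oddCount = (p : ℤ) - q := by
        have h1 := invp_odd_sum hk0 hKne hmono him (fOf P m k ps)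
        rw [invp_fOf hk0 hmono him ps hps0 hpsb] at h1
        rw [← h1]
        exact hpss
      refine ⟨mkSYD (fOf P m k ps) (fOf_le_mult ps) hn hodd, fun i => rfl, ?_⟩
      rw [mkSYD_f]
      exact invp_fOf hk0 hmono him ps hps0 hpsb
    · intro T Tp hf
      apply reach_of_bound_eq hn
      intro x hbx
      obtain ⟨s, h1, h2, rfl⟩ := (B_bound_iff hk0 hmono him).1 hbx
      have hTp : Usum P Tp.f (P.l (k s)) = Usum P (fOf P m k (invp P m k T.f)) (P.l (k s)) :=
        Finset.sum_congr rfl (fun y _ => hf y)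
      rw [hTp, fOf_usum hk0 hmono him _ (hVdiff T.f T.le_mult) h1 h2,
        invp_partial hmono him T.f s h2]
      rw [Vk, if_neg (by omega)]

/-- Every connected component of `Γ(λ;p,q)` contains exactly one of the
representatives `T(𝐩)`, `𝐩 ∈ P(λ;p,q)`; in particular the number of connected
components equals `#P(λ;p,q)`. -/
theorem stmt5 (P : PartitionData) (p q m : ℕ) (k : ℕ → ℕ)
    (hn : P.boxSum = p + q) (hk0 : k 0 = 0)
    (hk : (Kset P = ∅ ∧ m = 1 ∧ k 1 = 0) ∨
      (Kset P ≠ ∅ ∧ StrictMonoOn k (Set.Icc 0 m) ∧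
        (Finset.Icc 1 m).image k = Kset P)) :
    (∀ c : (orbitGraph P p q).ConnectedComponent,
      ∃! T : SYD P p q,
        (∃ ps ∈ Pset P p q m k, ∀ i, T.f i = fOf P m k ps i) ∧
          (orbitGraph P p q).connectedComponentMk T = c) ∧
    Nat.card (orbitGraph P p q).ConnectedComponent = (Pset P p q m k).ncard := by
  exact stmt5' P p q m k hn hk0 hk
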